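/- arXiv:1812.01534 — 6 statements merged into one kernel-verified Lean document; each statement's English description precedes it below -/
import Mathlib

section
/- For all ε > 0 there exists δ > 0 such that every finite triangle-free simple graph G admits a fractional colouring w such that for every v ∈ V(G), w(v) ⊆ [0, (1+ε)·max{deg(v)/log deg(v), δ/log δ}). -/
set_option maxHeartbeats 1000000
set_option maxRecDepth 4000

/-- A finite set of vertices is independent in `G`. -/
def IndepFinset {V : Type*} (G : SimpleGraph V) (s : Finset V) : Prop :=
  ∀ u ∈ s, ∀ v ∈ s, ¬ G.Adj u v

instance {V : Type*} (G : SimpleGraph V) [DecidableRel G.Adj] (s : Finset V) :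
    Decidable (IndepFinset G s) :=
  inferInstanceAs (Decidable (∀ u ∈ s, ∀ v ∈ s, ¬ G.Adj u v))

open MeasureTheory Finset

set_option linter.unusedSectionVars false

namespace LFM

lemma sum_pow_card {α : Type*} [DecidableEq α] (A : Finset α) (l : ℝ) :
    ∑ K ∈ A.powerset, l ^ K.card = (1 + l) ^ A.card := by
  have h := Finset.prod_add (fun _ : α => l) (fun _ => (1 : ℝ)) A
  simp only [Finset.prod_const, one_pow, mul_one] at h
  rw [add_comm 1 l, h]

lemma sum_card_pow_card {α : Type*} [DecidableEq α] (A : Finset α) (l : ℝ) :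
    ∑ K ∈ A.powerset, (K.card : ℝ) * l ^ K.card
      = (A.card : ℝ) * l * (1 + l) ^ (A.card - 1) := by
  induction A using Finset.induction_on with
  | empty => simp
  | @insert a A ha IH =>
    rw [Finset.powerset_insert, Finset.sum_union, Finset.sum_image]
    · have hcard : ∀ K ∈ A.powerset, (insert a K).card = K.card + 1 := by
        intro K hK
        exact Finset.card_insert_of_notMem fun h => ha (Finset.mem_powerset.mp hK h)
      have h2 : ∑ K ∈ A.powerset, ((insert a K).card : ℝ) * l ^ (insert a K).card
          = ∑ K ∈ A.powerset, ((K.card : ℝ) + 1) * l ^ (K.card + 1) := by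
        apply Finset.sum_congr rfl
        intro K hK; rw [hcard K hK]; push_cast; ring
      rw [h2]
      have h3 : ∑ K ∈ A.powerset, ((K.card : ℝ) + 1) * l ^ (K.card + 1)
          = l * (∑ K ∈ A.powerset, (K.card : ℝ) * l ^ K.card)
            + l * ∑ K ∈ A.powerset, l ^ K.card := by
        rw [Finset.mul_sum, Finset.mul_sum, ← Finset.sum_add_distrib]
        apply Finset.sum_congr rfl
        intro K _; ring
      rw [h3, IH, sum_pow_card]
      rw [Finset.card_insert_of_notMem ha]
      rcases Nat.eq_zero_or_pos A.card with h0 | h0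
      · rw [h0]; norm_num
      · have h4 : A.card - 1 + 1 = A.card := Nat.succ_pred_eq_of_pos h0
        have h5 : (1 + l) ^ A.card = (1 + l) ^ (A.card - 1) * (1 + l) := by
          rw [← pow_succ, h4]
        simp only [Nat.add_sub_cancel]
        rw [h5]; push_cast; ring
    · exact fun x hx y hy hxy => by
        have hax : a ∉ x := fun h => ha (Finset.mem_powerset.mp hx h)
        have hay : a ∉ y := fun h => ha (Finset.mem_powerset.mp hy h)
        rw [← Finset.erase_insert hax, ← Finset.erase_insert hay, hxy]
    · rw [Finset.disjoint_left]
      intro K hK hK2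
      obtain ⟨K', hK', rfl⟩ := Finset.mem_image.mp hK2
      exact ha (Finset.mem_powerset.mp hK (Finset.mem_insert_self a K'))

variable {V : Type} [Fintype V] [DecidableEq V] (G : SimpleGraph V) [DecidableRel G.Adj]

def ind (S : Finset V) : Finset (Finset V) := S.powerset.filter (fun I => IndepFinset G I)

lemma mem_ind {S I : Finset V} : I ∈ ind G S ↔ I ⊆ S ∧ IndepFinset G I := by
  simp [ind]

lemma ind_mono {S S' : Finset V} (h : S' ⊆ S) : ind G S' ⊆ ind G S := by
  intro I hI
  rw [mem_ind] at hI ⊢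
  exact ⟨hI.1.trans h, hI.2⟩

lemma empty_mem_ind (S : Finset V) : ∅ ∈ ind G S := by
  rw [mem_ind]
  exact ⟨Finset.empty_subset S, fun u hu => absurd hu (Finset.notMem_empty u)⟩

lemma singleton_mem_ind {S : Finset V} {v : V} (hv : v ∈ S) : {v} ∈ ind G S := by
  rw [mem_ind]
  refine ⟨Finset.singleton_subset_iff.mpr hv, ?_⟩
  intro u hu w hw
  rw [Finset.mem_singleton] at hu hw
  subst hu; subst hw
  exact G.loopless.irrefl _

variable (l : ℝ)

def Z (S : Finset V) : ℝ := ∑ I ∈ ind G S, l ^ I.card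

def Nw (S : Finset V) (v : V) : ℝ :=
  ∑ I ∈ (ind G S).filter (fun I => v ∈ I), l ^ I.card

variable {l}

lemma Z_pos (hl : 0 < l) (S : Finset V) : 0 < Z G l S :=
  Finset.sum_pos (fun I _ => pow_pos hl I.card) ⟨∅, empty_mem_ind G S⟩

lemma Nw_pos (hl : 0 < l) {S : Finset V} {v : V} (hv : v ∈ S) : 0 < Nw G l S v := by
  apply Finset.sum_pos (fun I _ => pow_pos hl I.card)
  exact ⟨{v}, Finset.mem_filter.mpr ⟨singleton_mem_ind G hv, Finset.mem_singleton_self v⟩⟩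

lemma greedy (hl : 0 < l) (a b : V → ℝ) (ha : ∀ v, 0 ≤ a v) (hb : ∀ v, 0 ≤ b v)
    (hOcc : ∀ S : Finset V, ∀ v ∈ S,
      Z G l S ≤ a v * Nw G l S v + b v * ∑ u ∈ G.neighborFinset v ∩ S, Nw G l S u) :
    ∀ (n : ℕ) (S : Finset V), S.card ≤ n → ∀ (y : V → ℝ), (∀ v ∈ S, 0 < y v) → ∀ (T : ℝ),
    ∃ w : Finset V → Set ℝ,
      (∀ I, MeasurableSet (w I)) ∧
      (∀ I, I ∉ ind G S → w I = ∅) ∧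
      (∀ I J, I ≠ J → Disjoint (w I) (w J)) ∧
      (∀ I, w I ⊆ Set.Ici T) ∧
      (∀ I, volume (w I) ≠ ⊤) ∧
      (∀ v ∈ S, ∀ I, v ∈ I →
        w I ⊆ Set.Ico T (T + (a v * y v + b v * ∑ u ∈ G.neighborFinset v ∩ S, y u))) ∧
      (∀ v ∈ S, y v ≤ ∑ I : Finset V, if v ∈ I then (volume (w I)).toReal else 0) := by
  intro n
  induction n with
  | zero =>
    intro S hcard y _ T
    have hS : S = ∅ := Finset.card_eq_zero.mp (Nat.le_zero.mp hcard)
    subst hS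
    refine ⟨fun _ => ∅, ?_, ?_, ?_, ?_, ?_, ?_, ?_⟩ <;> simp
  | succ n IH =>
    intro S hcard y hy T
    rcases le_or_gt S.card n with hle | hlt
    · exact IH S hle y hy T
    have hSne : S.Nonempty := Finset.card_pos.mp (by omega)
    have hZ : 0 < Z G l S := Z_pos G hl S
    have hN : ∀ v ∈ S, 0 < Nw G l S v := fun v hv => Nw_pos G hl hv
    set η := S.inf' hSne (fun v => y v * Z G l S / Nw G l S v) with hηdef
    have hηpos : 0 < η := by
      rw [hηdef, Finset.lt_inf'_iff]
      intro v hv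
      exact div_pos (mul_pos (hy v hv) hZ) (hN v hv)
    have hηle : ∀ v ∈ S, η * Nw G l S v / Z G l S ≤ y v := by
      intro v hv
      have h1 : η ≤ y v * Z G l S / Nw G l S v := Finset.inf'_le _ hv
      rw [div_le_iff₀ hZ]
      calc η * Nw G l S v ≤ (y v * Z G l S / Nw G l S v) * Nw G l S v :=
            mul_le_mul_of_nonneg_right h1 (hN v hv).le
        _ = y v * Z G l S := div_mul_cancel₀ _ (hN v hv).ne'
    obtain ⟨vs, hvs, hvseq⟩ := Finset.exists_mem_eq_inf' hSne
      (fun v => y v * Z G l S / Nw G l S v)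
    set y' := fun v => y v - η * Nw G l S v / Z G l S with hy'def
    have hy'nonneg : ∀ v ∈ S, 0 ≤ y' v := fun v hv => sub_nonneg.mpr (hηle v hv)
    have hy'vs : y' vs = 0 := by
      simp only [hy'def]
      rw [hηdef, hvseq, div_mul_cancel₀ _ (hN vs hvs).ne',
        mul_div_cancel_right₀ _ hZ.ne', sub_self]
    set S' := S.filter (fun v => 0 < y' v) with hS'def
    have hS'sub : S' ⊆ S := Finset.filter_subset _ _
    have hS'ssub : S' ⊂ S := by
      refine ⟨hS'sub, fun h => ?_⟩
      have := h hvs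
      rw [hS'def, Finset.mem_filter, hy'vs] at this
      exact lt_irrefl 0 this.2
    have hS'card : S'.card ≤ n := by
      have := Finset.card_lt_card hS'ssub
      omega
    have hmemS' : ∀ u : V, u ∈ S' ↔ u ∈ S ∧ 0 < y' u := by
      intro u; rw [hS'def, Finset.mem_filter]
    have hy' : ∀ v ∈ S', 0 < y' v := fun v hv => ((hmemS' v).mp hv).2
    clear_value η y' S'
    obtain ⟨w', hw'meas, hw'null, hw'disj, hw'ici, hw'fin, hw'cap, hw'cov⟩ :=
      IH S' hS'card y' hy' (T + η)
    -- enumeration of finsets and slice positions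
    set e : Finset V → ℕ := fun I => ((Fintype.equivFin (Finset V)) I : ℕ) with hedef
    have he : Function.Injective e := fun x₁ x₂ h =>
      (Fintype.equivFin (Finset V)).injective (Fin.val_injective h)
    set st : Finset V → ℝ :=
      fun I => ∑ J ∈ (ind G S).filter (fun J => e J < e I), l ^ J.card with hstdef
    have hstnn : ∀ I, 0 ≤ st I := fun I =>
      Finset.sum_nonneg fun J _ => (pow_pos hl J.card).le
    have hstep : ∀ I J, I ∈ ind G S → J ∈ ind G S → e I < e J →
        st I + l ^ I.card ≤ st J := by
      intro I J hI hJ hIJ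
      have hsub : insert I ((ind G S).filter (fun X => e X < e I))
          ⊆ (ind G S).filter (fun X => e X < e J) := by
        intro X hX
        rcases Finset.mem_insert.mp hX with rfl | hX
        · exact Finset.mem_filter.mpr ⟨hI, hIJ⟩
        · have := Finset.mem_filter.mp hX
          exact Finset.mem_filter.mpr ⟨this.1, this.2.trans hIJ⟩
      have hnotmem : I ∉ (ind G S).filter (fun X => e X < e I) := by
        intro h
        exact lt_irrefl (e I) (Finset.mem_filter.mp h).2
      calc st I + l ^ I.card
          = ∑ J' ∈ insert I ((ind G S).filter (fun X => e X < e I)), l ^ J'.card := by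
            rw [Finset.sum_insert hnotmem]; ring
        _ ≤ st J := Finset.sum_le_sum_of_subset_of_nonneg hsub
            (fun X _ _ => (pow_pos hl X.card).le)
    have hstZ : ∀ I ∈ ind G S, st I + l ^ I.card ≤ Z G l S := by
      intro I hI
      have hnotmem : I ∉ (ind G S).filter (fun X => e X < e I) := by
        intro h
        exact lt_irrefl (e I) (Finset.mem_filter.mp h).2
      calc st I + l ^ I.card
          = ∑ J' ∈ insert I ((ind G S).filter (fun X => e X < e I)), l ^ J'.card := by
            rw [Finset.sum_insert hnotmem]; ring
        _ ≤ Z G l S := Finset.sum_le_sum_of_subset_of_nonneg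
            (by intro X hX
                rcases Finset.mem_insert.mp hX with rfl | hX
                · exact hI
                · exact (Finset.mem_filter.mp hX).1)
            (fun X _ _ => (pow_pos hl X.card).le)
    have hηZnn : 0 ≤ η / Z G l S := (div_pos hηpos hZ).le
    set slice : Finset V → Set ℝ := fun I =>
      if I ∈ ind G S then
        Set.Ico (T + η / Z G l S * st I) (T + η / Z G l S * (st I + l ^ I.card))
      else ∅ with hslicedef
    have hsliceIco : ∀ I, slice I ⊆ Set.Ico T (T + η) := by
      intro I
      rw [hslicedef]
      dsimp only
      split
      · next hI =>
          apply Set.Ico_subset_Ico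
          · nlinarith [hstnn I]
          · have h1 : η / Z G l S * (st I + l ^ I.card) ≤ η / Z G l S * Z G l S :=
              mul_le_mul_of_nonneg_left (hstZ I hI) hηZnn
            have h2 : η / Z G l S * Z G l S = η := by field_simp
            linarith
      · exact Set.empty_subset _
    have hslicevol : ∀ I, (volume (slice I)).toReal
        = if I ∈ ind G S then η / Z G l S * l ^ I.card else 0 := by
      intro I
      rw [hslicedef]
      dsimp only
      split
      · next hI =>
          have harg : (T + η / Z G l S * (st I + l ^ I.card)) - (T + η / Z G l S * st I)
              = η / Z G l S * l ^ I.card := by ring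
          rw [Real.volume_Ico, harg, ENNReal.toReal_ofReal
            (mul_nonneg hηZnn (pow_pos hl I.card).le)]
      · simp
    have hslicefin : ∀ I, volume (slice I) ≠ ⊤ := by
      intro I
      rw [hslicedef]
      dsimp only
      split
      · rw [Real.volume_Ico]; exact ENNReal.ofReal_ne_top
      · simp
    have hslicemeas : ∀ I, MeasurableSet (slice I) := by
      intro I
      rw [hslicedef]
      dsimp only
      split
      · exact measurableSet_Ico
      · exact MeasurableSet.empty
    have hslicew'disj : ∀ I J, Disjoint (slice I) (w' J) := by
      intro I J
      apply Set.disjoint_of_subset ((hsliceIco I).trans Set.Ico_subset_Iio_self)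
        (hw'ici J)
      exact Set.Iio_disjoint_Ici le_rfl
    have hslicedisj : ∀ I J, I ≠ J → Disjoint (slice I) (slice J) := by
      intro I J hIJ
      rw [hslicedef]
      dsimp only
      split
      · next hI =>
        split
        · next hJ =>
          have hne : e I ≠ e J := fun h => hIJ (he h)
          rcases hne.lt_or_gt with h | h
          · rw [Set.Ico_disjoint_Ico]
            have := hstep I J hI hJ h
            have h1 : η / Z G l S * (st I + l ^ I.card) ≤ η / Z G l S * st J :=
              mul_le_mul_of_nonneg_left this hηZnn
            calc (T + η / Z G l S * (st I + l ^ I.card))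
                  ⊓ (T + η / Z G l S * (st J + l ^ J.card))
                ≤ T + η / Z G l S * (st I + l ^ I.card) := inf_le_left
              _ ≤ T + η / Z G l S * st J := by linarith
              _ ≤ _ := le_sup_right
          · rw [Set.Ico_disjoint_Ico]
            have := hstep J I hJ hI h
            have h1 : η / Z G l S * (st J + l ^ J.card) ≤ η / Z G l S * st I :=
              mul_le_mul_of_nonneg_left this hηZnn
            calc (T + η / Z G l S * (st I + l ^ I.card))
                  ⊓ (T + η / Z G l S * (st J + l ^ J.card))
                ≤ T + η / Z G l S * (st J + l ^ J.card) := inf_le_right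
              _ ≤ T + η / Z G l S * st I := by linarith
              _ ≤ _ := le_sup_left
        · next _ => exact Set.disjoint_empty _
      · exact Set.empty_disjoint _
    set w : Finset V → Set ℝ := fun I => slice I ∪ w' I with hwdef
    have hwmeas : ∀ I, MeasurableSet (w I) := fun I =>
      (hslicemeas I).union (hw'meas I)
    have hvol : ∀ I, volume (w I) = volume (slice I) + volume (w' I) := by
      intro I
      exact measure_union (hslicew'disj I I) (hw'meas I)
    have hwfin : ∀ I, volume (w I) ≠ ⊤ := by
      intro I
      rw [hvol I]
      exact ENNReal.add_ne_top.mpr ⟨hslicefin I, hw'fin I⟩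
    have hvolR : ∀ I, (volume (w I)).toReal
        = (volume (slice I)).toReal + (volume (w' I)).toReal := by
      intro I
      rw [hvol I, ENNReal.toReal_add (hslicefin I) (hw'fin I)]
    clear_value e st slice w
    refine ⟨w, hwmeas, ?_, ?_, ?_, hwfin, ?_, ?_⟩
    · -- null
      intro I hI
      have h1 : slice I = ∅ := by rw [hslicedef]; simp [hI]
      have h2 : w' I = ∅ := hw'null I (fun h => hI (ind_mono G hS'sub h))
      rw [hwdef]; simp [h1, h2]
    · -- disjoint
      intro I J hIJ
      rw [hwdef]
      dsimp only
      rw [Set.disjoint_union_left]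
      constructor
      · rw [Set.disjoint_union_right]
        exact ⟨hslicedisj I J hIJ, hslicew'disj I J⟩
      · rw [Set.disjoint_union_right]
        exact ⟨(hslicew'disj J I).symm, hw'disj I J hIJ⟩
    · -- Ici
      intro I
      rw [hwdef]
      apply Set.union_subset
      · exact (hsliceIco I).trans (Set.Ico_subset_Ici_self)
      · exact (hw'ici I).trans (Set.Ici_subset_Ici.mpr (by linarith))
    · -- cap
      intro v hv I hvI
      have hsumsub : ∑ u ∈ G.neighborFinset v ∩ S', y' u
          = ∑ u ∈ G.neighborFinset v ∩ S, y' u := by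
        apply Finset.sum_subset
        · exact Finset.inter_subset_inter_left hS'sub
        · intro u hu hu'
          have huS : u ∈ S := (Finset.mem_inter.mp hu).2
          have huNv : u ∈ G.neighborFinset v := (Finset.mem_inter.mp hu).1
          have huS' : u ∉ S' := fun h => hu' (Finset.mem_inter.mpr ⟨huNv, h⟩)
          have h1 : ¬ 0 < y' u := fun h => huS' ((hmemS' u).mpr ⟨huS, h⟩)
          linarith [hy'nonneg u huS, not_lt.mp h1]
      have hYsub : ∑ u ∈ G.neighborFinset v ∩ S, y u
            - ∑ u ∈ G.neighborFinset v ∩ S, y' u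
          = η / Z G l S * ∑ u ∈ G.neighborFinset v ∩ S, Nw G l S u := by
        rw [← Finset.sum_sub_distrib, Finset.mul_sum]
        apply Finset.sum_congr rfl
        intro u _
        rw [hy'def]
        ring
      have hkey : η + (a v * y' v + b v * ∑ u ∈ G.neighborFinset v ∩ S, y' u)
          ≤ a v * y v + b v * ∑ u ∈ G.neighborFinset v ∩ S, y u := by
        have hocc := hOcc S v hv
        have h1 : η / Z G l S * Z G l S
            ≤ η / Z G l S * (a v * Nw G l S v
              + b v * ∑ u ∈ G.neighborFinset v ∩ S, Nw G l S u) :=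
          mul_le_mul_of_nonneg_left hocc hηZnn
        have h2 : η / Z G l S * Z G l S = η := by field_simp
        have h3 : y v - y' v = η / Z G l S * Nw G l S v := by
          simp only [hy'def]; ring
        have h4 : a v * y v + b v * (∑ u ∈ G.neighborFinset v ∩ S, y u)
            - (a v * y' v + b v * ∑ u ∈ G.neighborFinset v ∩ S, y' u)
            = η / Z G l S * (a v * Nw G l S v
              + b v * ∑ u ∈ G.neighborFinset v ∩ S, Nw G l S u) := by
          rw [show a v * y v + b v * (∑ u ∈ G.neighborFinset v ∩ S, y u)
              - (a v * y' v + b v * ∑ u ∈ G.neighborFinset v ∩ S, y' u)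
              = a v * (y v - y' v) + b v * ((∑ u ∈ G.neighborFinset v ∩ S, y u)
                - ∑ u ∈ G.neighborFinset v ∩ S, y' u) from by ring, h3, hYsub]
          ring
        linarith [h1, h2, h4]
      have hΦ'nn : 0 ≤ a v * y' v + b v * ∑ u ∈ G.neighborFinset v ∩ S, y' u := by
        have h1 : 0 ≤ ∑ u ∈ G.neighborFinset v ∩ S, y' u :=
          Finset.sum_nonneg fun u hu => hy'nonneg u (Finset.mem_inter.mp hu).2
        exact add_nonneg (mul_nonneg (ha v) (hy'nonneg v hv))
          (mul_nonneg (hb v) h1)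
      have hηΦ : η ≤ a v * y v + b v * ∑ u ∈ G.neighborFinset v ∩ S, y u := by
        linarith
      rw [hwdef]
      apply Set.union_subset
      · exact (hsliceIco I).trans (Set.Ico_subset_Ico le_rfl (by linarith))
      · by_cases hI' : I ∈ ind G S'
        · have hvS' : v ∈ S' := (mem_ind G).mp hI' |>.1 hvI
          have := hw'cap v hvS' I hvI
          refine this.trans (Set.Ico_subset_Ico (by linarith) ?_)
          rw [hsumsub]
          linarith
        · rw [hw'null I hI']
          exact Set.empty_subset _
    · -- coverage
      intro v hv
      have hsplit : (∑ I : Finset V, if v ∈ I then (volume (w I)).toReal else 0)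
          = (∑ I : Finset V, if v ∈ I then (volume (slice I)).toReal else 0)
            + ∑ I : Finset V, if v ∈ I then (volume (w' I)).toReal else 0 := by
        rw [← Finset.sum_add_distrib]
        apply Finset.sum_congr rfl
        intro I _
        split
        · exact hvolR I
        · ring
      have hA : (∑ I : Finset V, if v ∈ I then (volume (slice I)).toReal else 0)
          = η / Z G l S * Nw G l S v := by
        have h1 : ∀ I : Finset V, (if v ∈ I then (volume (slice I)).toReal else 0)
            = if I ∈ (ind G S).filter (fun I => v ∈ I)
              then η / Z G l S * l ^ I.card else 0 := by
          intro I
          rw [hslicevol I]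
          by_cases h1 : v ∈ I <;> by_cases h2 : I ∈ ind G S <;>
            simp [h1, h2, Finset.mem_filter]
        rw [Finset.sum_congr rfl (fun I _ => h1 I), Finset.sum_ite_mem,
          Finset.univ_inter, Nw, Finset.mul_sum]
      have hB : (if v ∈ S' then y' v else 0)
          ≤ ∑ I : Finset V, if v ∈ I then (volume (w' I)).toReal else 0 := by
        split
        · next hvS' => exact hw'cov v hvS'
        · exact Finset.sum_nonneg fun I _ => by
            split
            · exact ENNReal.toReal_nonneg
            · exact le_rfl
      rw [hsplit, hA]
      by_cases hvS' : v ∈ S'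
      · rw [if_pos hvS'] at hB
        have hEq : η / Z G l S * Nw G l S v = y v - y' v := by
          simp only [hy'def]; ring
        linarith [hB, hEq]
      · rw [if_neg hvS'] at hB
        have h1 : ¬ 0 < y' v := fun h => hvS' ((hmemS' v).mpr ⟨hv, h⟩)
        have h2 : y' v ≤ 0 := not_lt.mp h1
        have h3 : y' v = y v - η / Z G l S * Nw G l S v := by
          simp only [hy'def]; ring
        linarith [hB, h2, h3]

lemma indep_subset {I J : Finset V} (hI : IndepFinset G I) (hJ : J ⊆ I) :
    IndepFinset G J :=
  fun x hx z hz => hI x (hJ hx) z (hJ hz)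

lemma occupancy (hG : G.CliqueFree 3) (hl : 0 < l) {A B : ℝ} (hB : 0 ≤ B)
    (v : V) (S : Finset V) (hv : v ∈ S)
    (hscal : ∀ m : ℕ, m ≤ G.degree v →
      l + (1 + l) ^ m ≤ A * l + B * ((m : ℝ) * l * (1 + l) ^ (m - 1))) :
    Z G l S ≤ A * Nw G l S v + B * ∑ u ∈ G.neighborFinset v ∩ S, Nw G l S u := by
  classical
  set Nb := G.neighborFinset v ∩ S with hNbdef
  set Kc := insert v Nb with hKcdef
  set Scl := S \ Kc with hScldef
  have hvNb : v ∉ Nb := by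
    rw [hNbdef]
    intro h
    exact G.loopless.irrefl v ((SimpleGraph.mem_neighborFinset _ _ _).mp (Finset.mem_inter.mp h).1)
  have hNbKc : Nb ⊆ Kc := Finset.subset_insert v Nb
  have hNbN : Nb ⊆ G.neighborFinset v := Finset.inter_subset_left
  have hNbS : Nb ⊆ S := Finset.inter_subset_right
  have hKcS : Kc ⊆ S := Finset.insert_subset hv hNbS
  -- pointwise functions
  set f0 : Finset V → ℝ := fun I => l ^ I.card with hf0def
  set fv : Finset V → ℝ := fun I => if v ∈ I then l ^ I.card else 0 with hfvdef
  set fM : Finset V → ℝ := fun I => ((I ∩ Nb).card : ℝ) * l ^ I.card with hfMdef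
  have hNv : Nw G l S v = ∑ I ∈ ind G S, fv I := by
    rw [Nw, hfvdef, Finset.sum_filter]
  have hM : (∑ u ∈ Nb, Nw G l S u) = ∑ I ∈ ind G S, fM I := by
    have h1 : ∀ u, Nw G l S u = ∑ I ∈ ind G S, if u ∈ I then l ^ I.card else 0 := by
      intro u; rw [Nw, Finset.sum_filter]
    rw [Finset.sum_congr rfl fun u _ => h1 u, Finset.sum_comm]
    apply Finset.sum_congr rfl
    intro I _
    rw [Finset.sum_ite_mem, Finset.sum_const, nsmul_eq_mul, hfMdef]
    rw [Finset.inter_comm]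
  have hmaps : ∀ I ∈ ind G S, I \ Kc ∈ ind G Scl := by
    intro I hI
    rw [mem_ind] at hI ⊢
    exact ⟨Finset.sdiff_subset_sdiff hI.1 (Finset.Subset.refl Kc),
      indep_subset G hI.2 Finset.sdiff_subset⟩
  have hmain : ∑ I ∈ ind G S, f0 I ≤ ∑ I ∈ ind G S, (A * fv I + B * fM I) := by
    rw [← Finset.sum_fiberwise_of_maps_to hmaps f0,
      ← Finset.sum_fiberwise_of_maps_to hmaps (fun I => A * fv I + B * fM I)]
    apply Finset.sum_le_sum
    intro J hJ
    rw [mem_ind] at hJ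
    obtain ⟨hJScl, hJindep⟩ := hJ
    have hJS : J ⊆ S := hJScl.trans Finset.sdiff_subset
    have hJKc : ∀ x ∈ J, x ∉ Kc := fun x hx => (Finset.mem_sdiff.mp (hJScl hx)).2
    have hJdisj : Disjoint J Kc := Finset.disjoint_left.mpr hJKc
    set AJ := Nb.filter (fun u => ∀ j ∈ J, ¬ G.Adj u j) with hAJdef
    have hAJNb : AJ ⊆ Nb := Finset.filter_subset _ _
    have hvAJpow : {v} ∉ AJ.powerset := by
      intro h
      exact hvNb (hAJNb (Finset.mem_powerset.mp h (Finset.mem_singleton_self v)))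
    set ext := insert {v} AJ.powerset with hextdef
    have hsubKc : ∀ K ∈ ext, K ⊆ Kc := by
      intro K hK
      rcases Finset.mem_insert.mp hK with rfl | hK
      · exact Finset.singleton_subset_iff.mpr (Finset.mem_insert_self v Nb)
      · exact (Finset.mem_powerset.mp hK).trans (hAJNb.trans hNbKc)
    have hdisjJK : ∀ K ∈ ext, Disjoint J K :=
      fun K hK => Finset.disjoint_left.mpr fun x hx hxK => hJKc x hx (hsubKc K hK hxK)
    have hcardu : ∀ K ∈ ext, (J ∪ K).card = J.card + K.card :=
      fun K hK => Finset.card_union_of_disjoint (hdisjJK K hK)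
    -- the bijection between the fiber over J and ext
    have hbij : ∀ F : Finset V → ℝ,
        ∑ I ∈ (ind G S).filter (fun I => I \ Kc = J), F I
          = ∑ K ∈ ext, F (J ∪ K) := by
      intro F
      apply Finset.sum_nbij' (i := fun I => I ∩ Kc) (j := fun K => J ∪ K)
      · -- hi : maps fiber into ext
        intro I hI
        obtain ⟨hIind, hIfib⟩ := Finset.mem_filter.mp hI
        rw [mem_ind] at hIind
        obtain ⟨hIS, hIindep⟩ := hIind
        by_cases hvI : v ∈ I
        · have : I ∩ Kc = {v} := by
            apply Finset.Subset.antisymm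
            · intro x hx
              obtain ⟨hxI, hxKc⟩ := Finset.mem_inter.mp hx
              rcases Finset.mem_insert.mp hxKc with rfl | hxNb
              · exact Finset.mem_singleton_self x
              · exact absurd ((SimpleGraph.mem_neighborFinset _ _ _).mp
                  (Finset.mem_inter.mp hxNb).1) (hIindep v hvI x hxI)
            · intro x hx
              rw [Finset.mem_singleton] at hx
              rw [hx]
              exact Finset.mem_inter.mpr ⟨hvI, Finset.mem_insert_self v Nb⟩
          rw [this, hextdef]
          exact Finset.mem_insert_self _ _
        · have : I ∩ Kc ⊆ AJ := by
            intro x hx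
            obtain ⟨hxI, hxKc⟩ := Finset.mem_inter.mp hx
            rcases Finset.mem_insert.mp hxKc with rfl | hxNb
            · exact absurd hxI hvI
            · rw [hAJdef, Finset.mem_filter]
              refine ⟨hxNb, fun j hj => ?_⟩
              have hjI : j ∈ I := by
                have := hIfib ▸ hj
                exact (Finset.mem_sdiff.mp this).1
              exact hIindep x hxI j hjI
          rw [hextdef]
          exact Finset.mem_insert_of_mem (Finset.mem_powerset.mpr this)
      · -- hj : maps ext into fiber
        intro K hK
        rw [Finset.mem_filter]
        constructor
        · rw [mem_ind]
          constructor
          · exact Finset.union_subset hJS ((hsubKc K hK).trans hKcS)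
          · intro x hx z hz
            rcases Finset.mem_union.mp hx with hxJ | hxK <;>
              rcases Finset.mem_union.mp hz with hzJ | hzK
            · exact hJindep x hxJ z hzJ
            · -- x ∈ J, z ∈ K
              rcases Finset.mem_insert.mp hK with rfl | hKpow
              · rw [Finset.mem_singleton] at hzK
                subst hzK
                intro hadj
                exact hJKc x hxJ (hNbKc (Finset.mem_inter.mpr
                  ⟨(SimpleGraph.mem_neighborFinset _ _ _).mpr hadj.symm, hJS hxJ⟩))
              · have hzAJ := Finset.mem_powerset.mp hKpow hzK
                rw [hAJdef, Finset.mem_filter] at hzAJ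
                exact fun hadj => hzAJ.2 x hxJ hadj.symm
            · -- x ∈ K, z ∈ J
              rcases Finset.mem_insert.mp hK with rfl | hKpow
              · rw [Finset.mem_singleton] at hxK
                subst hxK
                intro hadj
                exact hJKc z hzJ (hNbKc (Finset.mem_inter.mpr
                  ⟨(SimpleGraph.mem_neighborFinset _ _ _).mpr hadj, hJS hzJ⟩))
              · have hxAJ := Finset.mem_powerset.mp hKpow hxK
                rw [hAJdef, Finset.mem_filter] at hxAJ
                exact hxAJ.2 z hzJ
            · -- x, z ∈ K
              rcases Finset.mem_insert.mp hK with rfl | hKpow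
              · rw [Finset.mem_singleton] at hxK hzK
                rw [hxK, hzK]
                exact G.loopless.irrefl _
              · have hxNb := hAJNb (Finset.mem_powerset.mp hKpow hxK)
                have hzNb := hAJNb (Finset.mem_powerset.mp hKpow hzK)
                have hvx := (SimpleGraph.mem_neighborFinset _ _ _).mp (Finset.mem_inter.mp hxNb).1
                have hvz := (SimpleGraph.mem_neighborFinset _ _ _).mp (Finset.mem_inter.mp hzNb).1
                intro hadj
                exact hG _ (SimpleGraph.is3Clique_triple_iff.mpr ⟨hvx, hvz, hadj⟩)
        · -- (J ∪ K) \ Kc = J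
          rw [Finset.union_sdiff_distrib,
            Finset.sdiff_eq_empty_iff_subset.mpr (hsubKc K hK),
            Finset.union_empty, Finset.sdiff_eq_self_iff_disjoint.mpr hJdisj]
      · -- left inverse
        intro I hI
        have hIfib := (Finset.mem_filter.mp hI).2
        rw [← hIfib]
        exact Finset.sdiff_union_inter I Kc
      · -- right inverse
        intro K hK
        rw [Finset.union_inter_distrib_right,
          Finset.inter_eq_left.mpr (hsubKc K hK),
          Finset.disjoint_iff_inter_eq_empty.mp hJdisj, Finset.empty_union]
      · -- values agree
        intro I hI
        have hIfib := (Finset.mem_filter.mp hI).2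
        rw [← hIfib, Finset.sdiff_union_inter I Kc]
    rw [hbij, hbij]
    -- compute both sides over ext
    have hvJ : v ∉ J := fun h => hJKc v h (Finset.mem_insert_self v Nb)
    have hJNb : J ∩ Nb = ∅ := Finset.disjoint_iff_inter_eq_empty.mp
      (Finset.disjoint_of_subset_right hNbKc hJdisj)
    have hLHS : ∑ K ∈ ext, f0 (J ∪ K)
        = l ^ J.card * (l + (1 + l) ^ AJ.card) := by
      rw [hextdef, Finset.sum_insert hvAJpow]
      have h1 : f0 (J ∪ {v}) = l ^ J.card * l := by
        rw [hf0def]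
        have := hcardu {v} (Finset.mem_insert_self _ _)
        dsimp only
        rw [this, Finset.card_singleton, pow_succ]
      have h2 : ∑ K ∈ AJ.powerset, f0 (J ∪ K)
          = l ^ J.card * (1 + l) ^ AJ.card := by
        rw [← sum_pow_card AJ l, Finset.mul_sum]
        apply Finset.sum_congr rfl
        intro K hK
        rw [hf0def]
        dsimp only
        rw [hcardu K (Finset.mem_insert_of_mem hK), pow_add]
      rw [h1, h2]
      ring
    have hRv : ∑ K ∈ ext, fv (J ∪ K) = l ^ J.card * l := by
      rw [hextdef, Finset.sum_insert hvAJpow]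
      have h1 : fv (J ∪ {v}) = l ^ J.card * l := by
        rw [hfvdef]
        dsimp only
        rw [if_pos (Finset.mem_union_right J (Finset.mem_singleton_self v)),
          hcardu {v} (Finset.mem_insert_self _ _), Finset.card_singleton, pow_succ]
      have h2 : ∑ K ∈ AJ.powerset, fv (J ∪ K) = 0 := by
        apply Finset.sum_eq_zero
        intro K hK
        rw [hfvdef]
        dsimp only
        rw [if_neg]
        intro hmem
        rcases Finset.mem_union.mp hmem with h | h
        · exact hvJ h
        · exact hvNb (hAJNb (Finset.mem_powerset.mp hK h))
      rw [h1, h2, add_zero]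
    have hRM : ∑ K ∈ ext, fM (J ∪ K)
        = l ^ J.card * ((AJ.card : ℝ) * l * (1 + l) ^ (AJ.card - 1)) := by
      rw [hextdef, Finset.sum_insert hvAJpow]
      have h1 : fM (J ∪ {v}) = 0 := by
        rw [hfMdef]
        dsimp only
        rw [Finset.union_inter_distrib_right, hJNb]
        have : {v} ∩ Nb = ∅ := by
          rw [Finset.singleton_inter_of_notMem hvNb]
        rw [this, Finset.empty_union, Finset.card_empty, Nat.cast_zero, zero_mul]
      have h2 : ∑ K ∈ AJ.powerset, fM (J ∪ K)
          = l ^ J.card * ((AJ.card : ℝ) * l * (1 + l) ^ (AJ.card - 1)) := by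
        rw [← sum_card_pow_card AJ l, Finset.mul_sum]
        apply Finset.sum_congr rfl
        intro K hK
        have hKAJ := Finset.mem_powerset.mp hK
        rw [hfMdef]
        dsimp only
        have h3 : (J ∪ K) ∩ Nb = K := by
          rw [Finset.union_inter_distrib_right, hJNb, Finset.empty_union,
            Finset.inter_eq_left.mpr (hKAJ.trans hAJNb)]
        rw [h3, hcardu K (Finset.mem_insert_of_mem hK), pow_add]
        ring
      rw [h1, h2, zero_add]
    rw [hLHS, Finset.sum_add_distrib, ← Finset.mul_sum, ← Finset.mul_sum, hRv, hRM]
    have hsize : AJ.card ≤ G.degree v := by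
      rw [← SimpleGraph.card_neighborFinset_eq_degree]
      exact Finset.card_le_card (hAJNb.trans hNbN)
    have := hscal AJ.card hsize
    have hpow : (0:ℝ) ≤ l ^ J.card := (pow_pos hl J.card).le
    nlinarith [mul_le_mul_of_nonneg_left this hpow]
  calc Z G l S = ∑ I ∈ ind G S, f0 I := by rw [Z, hf0def]
    _ ≤ ∑ I ∈ ind G S, (A * fv I + B * fM I) := hmain
    _ = A * Nw G l S v + B * ∑ u ∈ Nb, Nw G l S u := by
        rw [Finset.sum_add_distrib, ← Finset.mul_sum, ← Finset.mul_sum, hNv, hM]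
    _ = _ := by rw [hNbdef]

end LFM

open MeasureTheory Finset LFM in
/-- Local fractional Molloy theorem (Theorem 2 of the paper): for every `ε > 0` there is
`δ > 0` such that every finite triangle-free graph `G` admits a fractional colouring `w`
(pairwise disjoint measurable sets assigned to independent sets, giving total weight at
least `1` to each vertex) with
`w(v) ⊆ [0, (1+ε)·max(deg(v)/log deg(v), δ/log δ))` for every vertex `v`. -/
theorem local_fractional_molloy (ε : ℝ) (hε : 0 < ε) :
    ∃ δ : ℝ, 0 < δ ∧
      ∀ (V : Type) [Fintype V] [DecidableEq V] (G : SimpleGraph V) [DecidableRel G.Adj],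
        G.CliqueFree 3 →
        ∃ w : Finset V → Set ℝ,
          (∀ I : Finset V, IndepFinset G I → MeasurableSet (w I)) ∧
          (∀ I J : Finset V, IndepFinset G I → IndepFinset G J → I ≠ J →
            Disjoint (w I) (w J)) ∧
          (∀ v : V,
            1 ≤ ∑ I : Finset V,
              if IndepFinset G I ∧ v ∈ I then MeasureTheory.volume (w I) else 0) ∧
          (∀ v : V, ∀ I : Finset V, IndepFinset G I → v ∈ I →
            w I ⊆ Set.Ico (0 : ℝ)
              ((1 + ε) * max ((G.degree v : ℝ) / Real.log (G.degree v))
                  (δ / Real.log δ))) := by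
  classical
  set ε' := min ε 1 with hε'def
  set l := ε' / 4 with hldef
  clear_value ε' l
  have hε'pos : 0 < ε' := by rw [hε'def]; exact lt_min hε one_pos
  have hε'le1 : ε' ≤ 1 := by rw [hε'def]; exact min_le_right ε 1
  have hε'leε : ε' ≤ ε := by rw [hε'def]; exact min_le_left ε 1
  have hl : 0 < l := by rw [hldef]; positivity
  -- threshold D
  obtain ⟨D, hD3, hDprop⟩ : ∃ D : ℕ, 3 ≤ D ∧ ∀ d : ℕ, D < d →
      (1 + (d : ℝ) ^ (1 - ε' / 8) / l) + ((1 + ε' / 2) / Real.log (d : ℝ)) * (d : ℝ)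
        ≤ (1 + ε') * ((d : ℝ) / Real.log (d : ℝ)) := by
    have hc8 : 0 < ε' / 8 := by positivity
    have hlil := (isLittleO_log_rpow_atTop hc8).def
      (show (0:ℝ) < ε' * ε' / 16 by positivity)
    have hlil2 := Real.isLittleO_log_id_atTop.def
      (show (0:ℝ) < ε' / 4 by positivity)
    rw [Filter.eventually_atTop] at hlil hlil2
    obtain ⟨R1, hR1⟩ := hlil
    obtain ⟨R2, hR2⟩ := hlil2
    refine ⟨max 3 ⌈max R1 R2⌉₊, le_max_left _ _, ?_⟩
    intro d hd
    have hd4 : 4 ≤ d := by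
      have := le_max_left 3 ⌈max R1 R2⌉₊
      omega
    set x := (d : ℝ) with hxdef
    clear_value x
    have hx4 : (4:ℝ) ≤ x := by
      rw [hxdef]
      exact_mod_cast hd4
    have hxR : max R1 R2 ≤ x := by
      rw [hxdef]
      calc max R1 R2 ≤ (⌈max R1 R2⌉₊ : ℝ) := Nat.le_ceil _
        _ ≤ (d : ℝ) := by
            have : ⌈max R1 R2⌉₊ ≤ d := by
              have := le_max_right 3 ⌈max R1 R2⌉₊
              omega
            exact_mod_cast this
    have hxpos : 0 < x := by linarith
    have hx1 : 1 < x := by linarith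
    have hL : 0 < Real.log x := Real.log_pos hx1
    have hlog1 : Real.log x ≤ ε' * ε' / 16 * x ^ (ε' / 8) := by
      have h := hR1 x (le_trans (le_max_left R1 R2) hxR)
      rw [Real.norm_eq_abs, Real.norm_eq_abs, abs_of_nonneg (Real.log_nonneg (by linarith)),
        abs_of_nonneg (Real.rpow_nonneg hxpos.le _)] at h
      exact h
    have hlog2 : Real.log x ≤ ε' / 4 * x := by
      have h := hR2 x (le_trans (le_max_right R1 R2) hxR)
      rw [Real.norm_eq_abs, Real.norm_eq_abs, abs_of_nonneg (Real.log_nonneg (by linarith))] at h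
      simpa [abs_of_nonneg hxpos.le] using h
    have hxx : x ^ (ε' / 8) * x ^ (1 - ε' / 8) = x := by
      rw [← Real.rpow_add hxpos]
      norm_num
    have hrpnn : 0 ≤ x ^ (1 - ε' / 8) := Real.rpow_nonneg hxpos.le _
    have h6 : Real.log x * x ^ (1 - ε' / 8) ≤ ε' * ε' / 16 * x := by
      calc Real.log x * x ^ (1 - ε' / 8)
          ≤ (ε' * ε' / 16 * x ^ (ε' / 8)) * x ^ (1 - ε' / 8) :=
            mul_le_mul_of_nonneg_right hlog1 hrpnn
        _ = ε' * ε' / 16 * x := by rw [mul_assoc, hxx]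
    have hkey : 1 + x ^ (1 - ε' / 8) / l ≤ ε' / 2 * x / Real.log x := by
      rw [le_div_iff₀ hL]
      have hxl : x ^ (1 - ε' / 8) / l = 4 / ε' * x ^ (1 - ε' / 8) := by
        rw [hldef, div_div_eq_mul_div]
        ring
      rw [hxl]
      have h7 : 4 / ε' * (Real.log x * x ^ (1 - ε' / 8)) ≤ 4 / ε' * (ε' * ε' / 16 * x) :=
        mul_le_mul_of_nonneg_left h6 (by positivity)
      have h8 : 4 / ε' * (ε' * ε' / 16 * x) = ε' / 4 * x := by
        field_simp
        ring
      nlinarith [h7, h8, hlog2]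
    have hfrac : ((1 + ε' / 2) / Real.log x) * x = (1 + ε' / 2) * (x / Real.log x) := by
      ring
    rw [hfrac]
    have hdiv : ε' / 2 * x / Real.log x = ε' / 2 * (x / Real.log x) := by ring
    rw [hdiv] at hkey
    nlinarith [hkey]
  set Asm := 1 + (1 + l) ^ D / l with hAsmdef
  set δ := (2 * Asm + 3) ^ 2 with hδdef
  clear_value Asm δ
  have hAsm1 : 1 ≤ Asm := by
    rw [hAsmdef]
    have : 0 < (1 + l) ^ D / l := by positivity
    linarith
  have h2A3 : 0 < 2 * Asm + 3 := by linarith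
  have hδpos : 0 < δ := by rw [hδdef]; exact pow_pos h2A3 2
  have hsqrt : Real.sqrt δ = 2 * Asm + 3 := by
    rw [hδdef]; exact Real.sqrt_sq h2A3.le
  have hδ1 : 1 < δ := by rw [hδdef]; nlinarith
  have hlogδpos : 0 < Real.log δ := Real.log_pos hδ1
  have hδlog : Asm ≤ δ / Real.log δ := by
    have h2 : Real.log δ = 2 * Real.log (Real.sqrt δ) := by
      rw [Real.log_sqrt hδpos.le]; ring
    have h3 : Real.log (Real.sqrt δ) ≤ Real.sqrt δ - 1 :=
      Real.log_le_sub_one_of_pos (by rw [hsqrt]; linarith)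
    have h1 : Real.log δ ≤ 2 * (2 * Asm + 3) := by
      rw [h2, hsqrt]
      rw [hsqrt] at h3
      linarith
    have h4 : δ / (2 * (2 * Asm + 3)) ≤ δ / Real.log δ :=
      div_le_div_of_nonneg_left hδpos.le hlogδpos h1
    have h5 : δ / (2 * (2 * Asm + 3)) = (2 * Asm + 3) / 2 := by
      rw [hδdef]
      field_simp
    rw [h5] at h4
    linarith
  have hCpos : 0 < δ / Real.log δ := div_pos hδpos hlogδpos
  refine ⟨δ, hδpos, ?_⟩
  intro V _ _ G _ hG
  set af : ℕ → ℝ :=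
    fun d => if d ≤ D then Asm else 1 + (d : ℝ) ^ (1 - ε' / 8) / l with hafdef
  set bf : ℕ → ℝ :=
    fun d => if d ≤ D then 0 else (1 + ε' / 2) / Real.log (d : ℝ) with hbfdef
  clear_value af bf
  have hlogd : ∀ d : ℕ, D < d → 0 < Real.log (d : ℝ) := by
    intro d hd
    apply Real.log_pos
    have : 2 ≤ d := by omega
    exact_mod_cast Nat.one_lt_cast.mpr (by omega)
  have haf : ∀ d, 0 ≤ af d := by
    intro d
    simp only [hafdef]
    split
    · linarith
    · have : 0 ≤ (d : ℝ) ^ (1 - ε' / 8) / l := by positivity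
      linarith
  have hbf : ∀ d, 0 ≤ bf d := by
    intro d
    simp only [hbfdef]
    split
    · exact le_rfl
    · next h => exact le_of_lt (div_pos (by linarith) (hlogd d (by omega)))
  -- the scalar inequality
  have hscal : ∀ d m : ℕ, m ≤ d →
      l + (1 + l) ^ m ≤ af d * l + bf d * ((m : ℝ) * l * (1 + l) ^ (m - 1)) := by
    intro d m hmd
    have h1l : (1:ℝ) ≤ 1 + l := by linarith
    by_cases hdD : d ≤ D
    · simp only [hafdef, hbfdef]
      rw [if_pos hdD, if_pos hdD, zero_mul, add_zero, hAsmdef, add_mul, one_mul,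
        div_mul_cancel₀ _ hl.ne']
      have : (1 + l) ^ m ≤ (1 + l) ^ D :=
        pow_le_pow_right₀ h1l (le_trans hmd hdD)
      linarith
    · have hDd : D < d := by omega
      have hLd : 0 < Real.log (d : ℝ) := hlogd d hDd
      simp only [hafdef, hbfdef]
      rw [if_neg hdD, if_neg hdD]
      set x := (d : ℝ) with hxdef
      have hxpos : (0:ℝ) < x := by
        rw [hxdef]
        have : (0:ℕ) < d := by omega
        exact_mod_cast this
      have hLx : 0 < Real.log x := by rw [hxdef]; exact hLd
      set Bd := (1 + ε' / 2) / Real.log x with hBddef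
      clear_value x Bd
      have hBdpos : 0 < Bd := by
        rw [hBddef]
        exact div_pos (by linarith) hLx
      set a0 := (1 + l) / (Bd * l) with ha0def
      clear_value a0
      have ha0pos : 0 < a0 := by
        rw [ha0def]
        exact div_pos (by linarith) (by positivity)
      have hlog1l : Real.log (1 + l) ≤ l := by
        have h := Real.log_le_sub_one_of_pos (show (0:ℝ) < 1 + l by linarith)
        rwa [add_sub_cancel_left] at h
      have hlognn : 0 ≤ Real.log (1 + l) := Real.log_nonneg h1l
      by_cases hm : (m : ℝ) ≤ a0
      · -- small m case
        have hcoef : (1 + l) ≤ (1 - ε' / 8) * (1 + ε' / 2) := by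
          rw [hldef]
          nlinarith [hε'pos, hε'le1]
        have hla0 : l * a0 ≤ (1 - ε' / 8) * Real.log x := by
          have hval : l * a0 = (1 + l) * Real.log x / (1 + ε' / 2) := by
            rw [ha0def, hBddef]
            field_simp
          rw [hval, div_le_iff₀ (by linarith : (0:ℝ) < 1 + ε' / 2)]
          nlinarith [hLx, hcoef]
        have hexp : (1 + l) ^ m ≤ x ^ (1 - ε' / 8) := by
          have e1 : ((1 + l) : ℝ) ^ m = (1 + l) ^ ((m : ℕ) : ℝ) :=
            (Real.rpow_natCast _ m).symm
          rw [e1, Real.rpow_def_of_pos (by linarith : (0:ℝ) < 1 + l),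
            Real.rpow_def_of_pos hxpos]
          apply Real.exp_le_exp.mpr
          calc Real.log (1 + l) * (m : ℝ) ≤ Real.log (1 + l) * a0 :=
                mul_le_mul_of_nonneg_left hm hlognn
            _ ≤ l * a0 := mul_le_mul_of_nonneg_right hlog1l ha0pos.le
            _ ≤ (1 - ε' / 8) * Real.log x := hla0
            _ = Real.log x * (1 - ε' / 8) := by ring
        have hBterm : 0 ≤ Bd * ((m : ℝ) * l * (1 + l) ^ (m - 1)) := by
          have : (0:ℝ) ≤ (m : ℝ) := Nat.cast_nonneg m
          positivity
        have hafl : (1 + x ^ (1 - ε' / 8) / l) * l = l + x ^ (1 - ε' / 8) := by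
          rw [add_mul, one_mul, div_mul_cancel₀ _ hl.ne']
        rw [hafl]
        linarith
      · -- large m case
        push_neg at hm
        have hm1 : 1 ≤ m := by
          by_contra h
          push_neg at h
          interval_cases m
          simp at hm
          linarith
        have hBda0 : Bd * a0 * l = 1 + l := by
          rw [ha0def]
          field_simp
        have hBml : 1 + l ≤ Bd * (m : ℝ) * l := by
          calc 1 + l = Bd * a0 * l := hBda0.symm
            _ ≤ Bd * (m : ℝ) * l := by
                apply mul_le_mul_of_nonneg_right _ hl.le
                exact mul_le_mul_of_nonneg_left hm.le hBdpos.le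
        have hpowm : (1 + l) ^ (m - 1) * (1 + l) = (1 + l) ^ m := by
          rw [← pow_succ]
          congr 1
          omega
        have hpownn : (0:ℝ) ≤ (1 + l) ^ (m - 1) := by positivity
        have hBterm : (1 + l) ^ m ≤ Bd * ((m : ℝ) * l * (1 + l) ^ (m - 1)) := by
          calc (1 + l) ^ m = (1 + l) * (1 + l) ^ (m - 1) := by rw [mul_comm, hpowm]
            _ ≤ (Bd * (m : ℝ) * l) * (1 + l) ^ (m - 1) :=
                mul_le_mul_of_nonneg_right hBml hpownn
            _ = Bd * ((m : ℝ) * l * (1 + l) ^ (m - 1)) := by ring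
        have hafl : l ≤ (1 + x ^ (1 - ε' / 8) / l) * l := by
          have h0 : (0:ℝ) ≤ x ^ (1 - ε' / 8) / l := by positivity
          nlinarith
        linarith
  -- the caps
  have hcaps : ∀ d : ℕ, af d + bf d * (d : ℝ)
      ≤ (1 + ε) * max ((d : ℝ) / Real.log (d : ℝ)) (δ / Real.log δ) := by
    intro d
    have hmaxnn : 0 ≤ max ((d : ℝ) / Real.log (d : ℝ)) (δ / Real.log δ) :=
      le_trans hCpos.le (le_max_right _ _)
    by_cases hdD : d ≤ D
    · simp only [hafdef, hbfdef]
      rw [if_pos hdD, if_pos hdD, zero_mul, add_zero]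
      calc Asm ≤ δ / Real.log δ := hδlog
        _ ≤ max ((d : ℝ) / Real.log (d : ℝ)) (δ / Real.log δ) := le_max_right _ _
        _ ≤ (1 + ε) * max ((d : ℝ) / Real.log (d : ℝ)) (δ / Real.log δ) :=
            le_mul_of_one_le_left hmaxnn (by linarith)
    · have hDd : D < d := by omega
      simp only [hafdef, hbfdef]
      rw [if_neg hdD, if_neg hdD]
      have h1 := hDprop d hDd
      have hLd : 0 < Real.log (d : ℝ) := hlogd d hDd
      have hxLpos : 0 ≤ (d : ℝ) / Real.log (d : ℝ) := by positivity
      calc (1 + (d : ℝ) ^ (1 - ε' / 8) / l) + ((1 + ε' / 2) / Real.log (d : ℝ)) * (d : ℝ)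
          ≤ (1 + ε') * ((d : ℝ) / Real.log (d : ℝ)) := h1
        _ ≤ (1 + ε) * max ((d : ℝ) / Real.log (d : ℝ)) (δ / Real.log δ) := by
            apply mul_le_mul (by linarith) (le_max_left _ _) hxLpos (by linarith)
  -- apply greedy
  have hOcc : ∀ S : Finset V, ∀ v ∈ S,
      Z G l S ≤ (fun v => af (G.degree v)) v * Nw G l S v
        + (fun v => bf (G.degree v)) v * ∑ u ∈ G.neighborFinset v ∩ S, Nw G l S u := by
    intro S v hv
    exact occupancy G hG hl (hbf (G.degree v)) v S hv
      (fun m hm => hscal (G.degree v) m hm)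
  obtain ⟨w, hmeas, hnull, hdisj, hici, hfin, hcap, hcov⟩ :=
    greedy G hl (fun v => af (G.degree v)) (fun v => bf (G.degree v))
      (fun v => haf _) (fun v => hbf _) hOcc Finset.univ.card Finset.univ le_rfl
      (fun _ => 1) (fun v _ => one_pos) 0
  refine ⟨w, fun I _ => hmeas I, fun I J _ _ hIJ => hdisj I J hIJ, ?_, ?_⟩
  · -- coverage
    intro v
    have hc := hcov v (Finset.mem_univ v)
    have hterm : ∀ I : Finset V,
        (if IndepFinset G I ∧ v ∈ I then volume (w I) else 0)
          = ENNReal.ofReal (if v ∈ I then (volume (w I)).toReal else 0) := by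
      intro I
      by_cases h1 : IndepFinset G I
      · by_cases h2 : v ∈ I
        · rw [if_pos ⟨h1, h2⟩, if_pos h2, ENNReal.ofReal_toReal (hfin I)]
        · rw [if_neg (fun h => h2 h.2), if_neg h2, ENNReal.ofReal_zero]
      · have hwI : w I = ∅ := hnull I (by
          rw [mem_ind]
          exact fun h => h1 h.2)
        rw [if_neg (fun h => h1 h.1), hwI]
        split <;> simp
    rw [Finset.sum_congr rfl fun I _ => hterm I,
      ← ENNReal.ofReal_sum_of_nonneg (fun I _ => by
        split
        · exact ENNReal.toReal_nonneg
        · exact le_rfl)]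
    rw [← ENNReal.ofReal_one]
    exact ENNReal.ofReal_le_ofReal hc
  · -- caps
    intro v I hIind hvI
    have hsub := hcap v (Finset.mem_univ v) I hvI
    refine hsub.trans (Set.Ico_subset_Ico le_rfl ?_)
    have hdeg : (∑ u ∈ G.neighborFinset v ∩ Finset.univ, (1:ℝ)) = (G.degree v : ℝ) := by
      rw [Finset.inter_univ, Finset.sum_const, nsmul_eq_mul, mul_one,
        SimpleGraph.card_neighborFinset_eq_degree]
    have hcv := hcaps (G.degree v)
    rw [hdeg]
    linarith [hcv]
end

section
/- Let G be a finite triangle-free simple graph and let (α_v)_{v∈V(G)} and (β_v)_{v∈V(G)} be families of positive real numbers. Let λ > 0 and let 𝐈 be a random independent set drawn from the hard-core model on G at fugacity λ. Then for every v ∈ V(G), α_v·Pr(v ∈ 𝐈) + β_v·𝔼|N(v) ∩ 𝐈| ≥ β_v·λ·(log(α_v/β_v) + log log(1+λ) + 1) / ((1+λ)·log(1+λ)). -/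
/-- The probability that the hard-core model on `G` at fugacity `lam` produces the set
`I`: it is `lam^|I| / Z_G(lam)` if `I` is independent, and `0` otherwise. -/
noncomputable def hcProb {V : Type*} [Fintype V] (G : SimpleGraph V) [DecidableRel G.Adj]
    (lam : ℝ) (I : Finset V) : ℝ :=
  (if IndepFinset G I then lam ^ I.card else 0) /
    ∑ J : Finset V, if IndepFinset G J then lam ^ J.card else 0

section Aux


lemma sum_pow_powerset {V : Type*} [DecidableEq V] (F : Finset V) (x : ℝ) :
    ∑ S ∈ F.powerset, x ^ S.card = (x + 1) ^ F.card := by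
  have h := Finset.prod_add (fun _ : V => x) (fun _ => (1:ℝ)) F
  simp only [Finset.prod_const, Finset.prod_const_one, mul_one, one_pow] at h
  rw [← h]

lemma sum_pow_card_powerset {V : Type*} [DecidableEq V] (F : Finset V) (x : ℝ) :
    (∑ S ∈ F.powerset, x ^ S.card * S.card) * (x + 1)
      = F.card * x * (x + 1) ^ F.card := by
  induction F using Finset.induction with
  | empty => simp
  | @insert a F ha ih =>
    rw [Finset.sum_powerset_insert ha]
    have hcongr : ∀ S ∈ F.powerset,
        x ^ (insert a S).card * ((insert a S).card : ℝ)
          = x * (x ^ S.card * S.card) + x * x ^ S.card := by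
      intro S hS
      rw [Finset.card_insert_of_notMem (fun h => ha (Finset.mem_powerset.mp hS h))]
      push_cast
      ring
    rw [Finset.sum_congr rfl hcongr, Finset.sum_add_distrib, ← Finset.mul_sum, ← Finset.mul_sum,
      sum_pow_powerset]
    rw [Finset.card_insert_of_notMem ha]
    push_cast
    linear_combination (1 + x) * ih

lemma key_analytic (a b lam : ℝ) (ha : 0 < a) (hb : 0 < b) (hlam : 0 < lam) (m : ℕ) :
    b * lam * (Real.log (a / b) + Real.log (Real.log (1 + lam)) + 1) /
        ((1 + lam) * Real.log (1 + lam)) * (lam + (1 + lam) ^ m)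
      ≤ a * lam + b * ((m : ℝ) * lam * (1 + lam) ^ m / (1 + lam)) := by
  set L := Real.log (1 + lam) with hLdef
  have hL : 0 < L := Real.log_pos (by linarith)
  have h1lam : (0:ℝ) < 1 + lam := by linarith
  set t : ℝ := (1 + lam) ^ m with htdef
  have ht : (0:ℝ) < t := pow_pos h1lam m
  have hlt : Real.log t = m * L := by rw [htdef, Real.log_pow]
  set c : ℝ := a * L / b with hcdef
  have hc : 0 < c := by positivity
  -- rewrite the log sum
  have hU : Real.log (a / b) + Real.log L + 1 = Real.log c + 1 := by
    rw [hcdef, show a * L / b = (a / b) * L by ring,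
      Real.log_mul (ne_of_gt (div_pos ha hb)) (ne_of_gt hL)]
  rw [hU]
  -- rewrite the m-term
  have hm : b * ((m : ℝ) * lam * (1 + lam) ^ m / (1 + lam))
      = b * lam * (t * Real.log t) / ((1 + lam) * L) := by
    rw [hlt, ← htdef]
    field_simp
  rw [hm]
  -- core inequality
  have h1 : Real.log c + 1 ≤ c := by linarith [Real.log_le_sub_one_of_pos hc]
  have h2 : t * Real.log c + t - c ≤ t * Real.log t := by
    have := Real.log_le_sub_one_of_pos (div_pos hc ht)
    rw [Real.log_div (ne_of_gt hc) (ne_of_gt ht)] at this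
    have h4 : t * (c / t) = c := mul_div_cancel₀ c (ne_of_gt ht)
    nlinarith [mul_le_mul_of_nonneg_left this ht.le, h4]
  have hbr : (Real.log c + 1) * (lam + t) ≤ c * (1 + lam) + t * Real.log t := by
    nlinarith [mul_le_mul_of_nonneg_right h1 hlam.le]
  have hcb : c * b = a * L := by rw [hcdef]; field_simp
  have hmain : b * lam * (Real.log c + 1) * (lam + t)
      ≤ a * lam * ((1 + lam) * L) + b * lam * (t * Real.log t) := by
    have h3 := mul_le_mul_of_nonneg_left hbr (le_of_lt (mul_pos hb hlam))
    have h5 : b * lam * (c * (1 + lam)) = a * lam * ((1 + lam) * L) := by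
      linear_combination lam * (1 + lam) * hcb
    nlinarith [h3, h5]
  have hD : (0:ℝ) < (1 + lam) * L := by positivity
  rw [div_mul_eq_mul_div]
  rw [div_le_iff₀ hD]
  have : (a * lam + b * lam * (t * Real.log t) / ((1 + lam) * L)) * ((1 + lam) * L)
      = a * lam * ((1 + lam) * L) + b * lam * (t * Real.log t) := by
    field_simp
  rw [this]
  linarith [hmain]
variable {V : Type*} [Fintype V] [DecidableEq V] (G : SimpleGraph V) [DecidableRel G.Adj]

/-- Neighbours of `v` that have no neighbour in `J`. -/
def freeNbr (v : V) (J : Finset V) : Finset V :=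
  (G.neighborFinset v).filter (fun u => ∀ w ∈ J, ¬ G.Adj u w)

lemma fiber_eq (hG : G.CliqueFree 3) (v : V) (J : Finset V) (hJ : IndepFinset G J)
    (hd : ∀ u ∈ J, u ∉ insert v (G.neighborFinset v)) :
    (Finset.univ.filter (fun I => IndepFinset G I)).filter
        (fun I => I \ insert v (G.neighborFinset v) = J)
      = insert (insert v J) (((freeNbr G v J).powerset).image (fun S => J ∪ S)) := by
  have hvJ : v ∉ J := fun h => hd v h (Finset.mem_insert_self _ _)
  ext I
  simp only [Finset.mem_filter, Finset.mem_univ, true_and, Finset.mem_insert,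
    Finset.mem_image, Finset.mem_powerset]
  constructor
  · rintro ⟨hI, hφ⟩
    by_cases hv : v ∈ I
    · left
      ext u
      simp only [Finset.mem_insert]
      constructor
      · intro hu
        by_cases huv : u = v
        · exact Or.inl huv
        · right
          rw [← hφ]
          simp only [Finset.mem_sdiff, Finset.mem_insert, SimpleGraph.mem_neighborFinset]
          exact ⟨hu, fun h => h.elim huv (fun hadj => hI v hv u hu hadj)⟩
      · rintro (rfl | hu)
        · exact hv
        · rw [← hφ] at hu; exact (Finset.mem_sdiff.mp hu).1
    · right
      refine ⟨I ∩ G.neighborFinset v, ?_, ?_⟩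
      · intro u hu
        simp only [Finset.mem_inter, SimpleGraph.mem_neighborFinset] at hu
        simp only [freeNbr, Finset.mem_filter, SimpleGraph.mem_neighborFinset]
        refine ⟨hu.2, fun w hw => ?_⟩
        have hwI : w ∈ I := by rw [← hφ] at hw; exact (Finset.mem_sdiff.mp hw).1
        exact hI u hu.1 w hwI
      · ext u
        simp only [Finset.mem_union, Finset.mem_inter]
        constructor
        · rintro (hu | hu)
          · rw [← hφ] at hu; exact (Finset.mem_sdiff.mp hu).1
          · exact hu.1
        · intro hu
          by_cases hun : u ∈ G.neighborFinset v
          · exact Or.inr ⟨hu, hun⟩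
          · left
            rw [← hφ]
            simp only [Finset.mem_sdiff, Finset.mem_insert]
            exact ⟨hu, fun h => h.elim (fun h' => hv (h' ▸ hu)) hun⟩
  · rintro (rfl | ⟨S, hS, rfl⟩)
    · constructor
      · intro u hu w hw hadj
        simp only [Finset.mem_insert] at hu hw
        rcases hu with rfl | hu <;> rcases hw with rfl | hw
        · exact G.irrefl hadj
        · exact hd w hw (Finset.mem_insert_of_mem ((SimpleGraph.mem_neighborFinset G u w).mpr hadj))
        · exact hd u hu (Finset.mem_insert_of_mem ((SimpleGraph.mem_neighborFinset G w u).mpr hadj.symm))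
        · exact hJ u hu w hw hadj
      · ext u
        simp only [Finset.mem_sdiff, Finset.mem_insert]
        constructor
        · rintro ⟨rfl | hu, hn⟩
          · exact absurd (Or.inl rfl) hn
          · exact hu
        · intro hu
          exact ⟨Or.inr hu, fun h => hd u hu (Finset.mem_insert.mpr h)⟩
    · have hSN : S ⊆ G.neighborFinset v := fun u hu => (Finset.mem_filter.mp (hS hu)).1
      have hSfree : ∀ u ∈ S, ∀ w ∈ J, ¬ G.Adj u w :=
        fun u hu => (Finset.mem_filter.mp (hS hu)).2
      constructor
      · intro u hu w hw hadj
        simp only [Finset.mem_union] at hu hw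
        rcases hu with hu | hu <;> rcases hw with hw | hw
        · exact hJ u hu w hw hadj
        · exact hSfree w hw u hu hadj.symm
        · exact hSfree u hu w hw hadj
        · -- u, w ∈ S ⊆ N(v): triangle-free
          have h1 : G.Adj v u := (SimpleGraph.mem_neighborFinset G v u).mp (hSN hu)
          have h2 : G.Adj v w := (SimpleGraph.mem_neighborFinset G v w).mp (hSN hw)
          exact hG {v, u, w} (SimpleGraph.is3Clique_triple_iff.mpr ⟨h1, h2, hadj⟩)
      · ext u
        simp only [Finset.mem_sdiff, Finset.mem_union, Finset.mem_insert]
        constructor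
        · rintro ⟨hu | hu, hn⟩
          · exact hu
          · exact absurd (Or.inr (hSN hu)) hn
        · intro hu
          exact ⟨Or.inl hu, fun h => hd u hu (Finset.mem_insert.mpr h)⟩
lemma fiber_bound (hG : G.CliqueFree 3) (v : V) (J : Finset V) (hJ : IndepFinset G J)
    (hd : ∀ u ∈ J, u ∉ insert v (G.neighborFinset v))
    (a b lam : ℝ) (ha : 0 < a) (hb : 0 < b) (hlam : 0 < lam) :
    b * lam * (Real.log (a / b) + Real.log (Real.log (1 + lam)) + 1) /
        ((1 + lam) * Real.log (1 + lam)) *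
      (∑ I ∈ (Finset.univ.filter (fun I => IndepFinset G I)).filter
          (fun I => I \ insert v (G.neighborFinset v) = J), lam ^ I.card)
    ≤ a * (∑ I ∈ (Finset.univ.filter (fun I => IndepFinset G I)).filter
          (fun I => I \ insert v (G.neighborFinset v) = J),
          if v ∈ I then lam ^ I.card else 0)
      + b * (∑ I ∈ (Finset.univ.filter (fun I => IndepFinset G I)).filter
          (fun I => I \ insert v (G.neighborFinset v) = J),
          lam ^ I.card * ((G.neighborFinset v ∩ I).card : ℝ)) := by
  have hvJ : v ∉ J := fun h => hd v h (Finset.mem_insert_self _ _)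
  have hvN : v ∉ G.neighborFinset v := by
    simp [SimpleGraph.mem_neighborFinset]
  set F := freeNbr G v J with hF
  have hFN : F ⊆ G.neighborFinset v := Finset.filter_subset _ _
  have hJN : ∀ u ∈ J, u ∉ G.neighborFinset v :=
    fun u hu h => hd u hu (Finset.mem_insert_of_mem h)
  have hdisj : ∀ S ∈ F.powerset, Disjoint J S := by
    intro S hS
    rw [Finset.mem_powerset] at hS
    exact Finset.disjoint_left.mpr (fun u hu h => hJN u hu (hFN (hS h)))
  have hnotmem : insert v J ∉ (F.powerset).image (fun S => J ∪ S) := by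
    simp only [Finset.mem_image, Finset.mem_powerset]
    rintro ⟨S, hS, hEq⟩
    have : v ∈ J ∪ S := hEq ▸ Finset.mem_insert_self v J
    rcases Finset.mem_union.mp this with h | h
    · exact hvJ h
    · exact hvN (hFN (hS h))
  have hinj : ∀ S₁ ∈ F.powerset, ∀ S₂ ∈ F.powerset,
      J ∪ S₁ = J ∪ S₂ → S₁ = S₂ := by
    intro S₁ h₁ S₂ h₂ hEq
    have key : ∀ S ∈ F.powerset, (J ∪ S) ∩ F = S := by
      intro S hS
      rw [Finset.union_inter_distrib_right]
      rw [Finset.mem_powerset] at hS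
      rw [Finset.inter_eq_left.mpr hS]
      have : J ∩ F = ∅ := by
        rw [Finset.eq_empty_iff_forall_notMem]
        intro u hu
        rw [Finset.mem_inter] at hu
        exact hJN u hu.1 (hFN hu.2)
      rw [this, Finset.empty_union]
    rw [← key S₁ h₁, ← key S₂ h₂, hEq]
  have hcardins : (insert v J).card = J.card + 1 := Finset.card_insert_of_notMem hvJ
  have hcardu : ∀ S ∈ F.powerset, (J ∪ S).card = J.card + S.card := by
    intro S hS
    exact Finset.card_union_of_disjoint (hdisj S hS)
  rw [fiber_eq G hG v J hJ hd, Finset.sum_insert hnotmem, Finset.sum_insert hnotmem,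
    Finset.sum_insert hnotmem, Finset.sum_image hinj, Finset.sum_image hinj,
    Finset.sum_image hinj]
  have h1lam : (0:ℝ) < 1 + lam := by linarith
  -- compute the Z-sum
  have eZ : lam ^ (insert v J).card + ∑ S ∈ F.powerset, lam ^ (J ∪ S).card
      = lam ^ J.card * (lam + (1 + lam) ^ F.card) := by
    rw [hcardins]
    rw [Finset.sum_congr rfl (fun S hS => by rw [hcardu S hS, pow_add])]
    rw [← Finset.mul_sum, sum_pow_powerset]
    ring_nf
  -- compute the A-sum
  have eA : (if v ∈ insert v J then lam ^ (insert v J).card else 0)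
      + ∑ S ∈ F.powerset, (if v ∈ J ∪ S then lam ^ (J ∪ S).card else 0)
      = lam ^ J.card * lam := by
    rw [if_pos (Finset.mem_insert_self v J), hcardins]
    have : ∀ S ∈ F.powerset, (if v ∈ J ∪ S then lam ^ (J ∪ S).card else 0) = 0 := by
      intro S hS
      rw [if_neg]
      rw [Finset.mem_powerset] at hS
      intro h
      rcases Finset.mem_union.mp h with h | h
      · exact hvJ h
      · exact hvN (hFN (hS h))
    rw [Finset.sum_congr rfl this, Finset.sum_const, smul_zero, add_zero, pow_succ]
  -- compute the B-sum
  have eB : lam ^ (insert v J).card * ((G.neighborFinset v ∩ insert v J).card : ℝ)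
      + ∑ S ∈ F.powerset, lam ^ (J ∪ S).card * ((G.neighborFinset v ∩ (J ∪ S)).card : ℝ)
      = lam ^ J.card * ((F.card : ℝ) * lam * (1 + lam) ^ F.card / (1 + lam)) := by
    have h0 : G.neighborFinset v ∩ insert v J = ∅ := by
      rw [Finset.eq_empty_iff_forall_notMem]
      intro u hu
      rw [Finset.mem_inter, Finset.mem_insert] at hu
      rcases hu.2 with rfl | h
      · exact hvN hu.1
      · exact hJN u h hu.1
    rw [h0]
    simp only [Finset.card_empty, Nat.cast_zero, mul_zero, zero_add]
    have hint : ∀ S ∈ F.powerset, G.neighborFinset v ∩ (J ∪ S) = S := by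
      intro S hS
      rw [Finset.mem_powerset] at hS
      ext u
      simp only [Finset.mem_inter, Finset.mem_union]
      constructor
      · rintro ⟨hn, hu | hu⟩
        · exact absurd hn (hJN u hu)
        · exact hu
      · intro hu
        exact ⟨hFN (hS hu), Or.inr hu⟩
    rw [Finset.sum_congr rfl (fun S hS => by rw [hint S hS, hcardu S hS, pow_add])]
    have : ∑ S ∈ F.powerset, lam ^ J.card * lam ^ S.card * (S.card : ℝ)
        = lam ^ J.card * ∑ S ∈ F.powerset, lam ^ S.card * (S.card : ℝ) := by
      rw [Finset.mul_sum]; exact Finset.sum_congr rfl fun S _ => by ring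
    rw [this]
    congr 1
    rw [eq_div_iff (ne_of_gt h1lam)]
    have h := sum_pow_card_powerset F lam
    rw [show lam + 1 = 1 + lam from by ring] at h
    exact h
  rw [eZ, eA, eB]
  have hkey := key_analytic a b lam ha hb hlam F.card
  have hpow : (0:ℝ) ≤ lam ^ J.card := by positivity
  calc b * lam * (Real.log (a / b) + Real.log (Real.log (1 + lam)) + 1) /
        ((1 + lam) * Real.log (1 + lam)) * (lam ^ J.card * (lam + (1 + lam) ^ F.card))
      = lam ^ J.card * (b * lam * (Real.log (a / b) + Real.log (Real.log (1 + lam)) + 1) /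
        ((1 + lam) * Real.log (1 + lam)) * (lam + (1 + lam) ^ F.card)) := by ring
    _ ≤ lam ^ J.card * (a * lam + b * ((F.card : ℝ) * lam * (1 + lam) ^ F.card / (1 + lam))) :=
        mul_le_mul_of_nonneg_left hkey hpow
    _ = a * (lam ^ J.card * lam) + b * (lam ^ J.card *
          ((F.card : ℝ) * lam * (1 + lam) ^ F.card / (1 + lam))) := by ring

lemma main_ineq (hG : G.CliqueFree 3) (v : V) (a b lam : ℝ)
    (ha : 0 < a) (hb : 0 < b) (hlam : 0 < lam) :
    b * lam * (Real.log (a / b) + Real.log (Real.log (1 + lam)) + 1) /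
        ((1 + lam) * Real.log (1 + lam)) *
      (∑ I : Finset V, if IndepFinset G I then lam ^ I.card else 0)
    ≤ a * (∑ I : Finset V,
          if v ∈ I then (if IndepFinset G I then lam ^ I.card else 0) else 0)
      + b * (∑ I : Finset V,
          (if IndepFinset G I then lam ^ I.card else 0) * ((G.neighborFinset v ∩ I).card : ℝ)) := by
  classical
  have hZ : (∑ I : Finset V, if IndepFinset G I then lam ^ I.card else 0)
      = ∑ I ∈ Finset.univ.filter (fun I => IndepFinset G I), lam ^ I.card :=
    (Finset.sum_filter _ _).symm
  have hA : (∑ I : Finset V,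
        if v ∈ I then (if IndepFinset G I then lam ^ I.card else 0) else 0)
      = ∑ I ∈ Finset.univ.filter (fun I => IndepFinset G I),
          (if v ∈ I then lam ^ I.card else 0) := by
    rw [Finset.sum_filter]
    refine Finset.sum_congr rfl fun I _ => ?_
    by_cases h1 : IndepFinset G I <;> by_cases h2 : v ∈ I <;> simp [h1, h2]
  have hB : (∑ I : Finset V,
        (if IndepFinset G I then lam ^ I.card else 0) * ((G.neighborFinset v ∩ I).card : ℝ))
      = ∑ I ∈ Finset.univ.filter (fun I => IndepFinset G I),
          lam ^ I.card * ((G.neighborFinset v ∩ I).card : ℝ) := by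
    rw [Finset.sum_filter]
    refine Finset.sum_congr rfl fun I _ => ?_
    by_cases h1 : IndepFinset G I <;> simp [h1]
  rw [hZ, hA, hB]
  set t : Finset (Finset V) := Finset.univ.filter
    (fun J => IndepFinset G J ∧ ∀ u ∈ J, u ∉ insert v (G.neighborFinset v)) with ht
  have hmaps : ∀ I ∈ Finset.univ.filter (fun I => IndepFinset G I),
      (I \ insert v (G.neighborFinset v)) ∈ t := by
    intro I hI
    rw [Finset.mem_filter] at hI
    rw [ht, Finset.mem_filter]
    refine ⟨Finset.mem_univ _, fun u hu w hw => hI.2 u (Finset.mem_sdiff.mp hu).1 w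
      (Finset.mem_sdiff.mp hw).1, fun u hu => (Finset.mem_sdiff.mp hu).2⟩
  rw [← Finset.sum_fiberwise_of_maps_to hmaps (fun I => lam ^ I.card),
    ← Finset.sum_fiberwise_of_maps_to hmaps (fun I => if v ∈ I then lam ^ I.card else 0),
    ← Finset.sum_fiberwise_of_maps_to hmaps
      (fun I => lam ^ I.card * ((G.neighborFinset v ∩ I).card : ℝ)),
    Finset.mul_sum, Finset.mul_sum, Finset.mul_sum, ← Finset.sum_add_distrib]
  refine Finset.sum_le_sum fun J hJ => ?_
  rw [ht, Finset.mem_filter] at hJ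
  exact fiber_bound G hG v J hJ.2.1 hJ.2.2 a b lam ha hb hlam

end Aux

/-- Lemma 4 of the paper: a local lower bound in the hard-core model on a triangle-free
graph. For a random independent set `𝐈` from the hard-core model at fugacity `lam > 0`,
every vertex `v` satisfies
`α_v·Pr(v ∈ 𝐈) + β_v·𝔼|N(v) ∩ 𝐈| ≥ β_v·lam·(log(α_v/β_v) + log log(1+lam) + 1) / ((1+lam)·log(1+lam))`. -/
theorem hard_core_local_bound {V : Type*} [Fintype V] [DecidableEq V]
    (G : SimpleGraph V) [DecidableRel G.Adj] (hG : G.CliqueFree 3)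
    (α β : V → ℝ) (hα : ∀ v, 0 < α v) (hβ : ∀ v, 0 < β v)
    (lam : ℝ) (hlam : 0 < lam) (v : V) :
    β v * lam * (Real.log (α v / β v) + Real.log (Real.log (1 + lam)) + 1) /
        ((1 + lam) * Real.log (1 + lam)) ≤
      α v * (∑ I : Finset V, if v ∈ I then hcProb G lam I else 0) +
        β v * ∑ I : Finset V, hcProb G lam I * ((G.neighborFinset v ∩ I).card : ℝ) := by
  classical
  simp only [hcProb]
  set Z : ℝ := ∑ J : Finset V, if IndepFinset G J then lam ^ J.card else 0 with hZdef
  have hZpos : 0 < Z := by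
    rw [hZdef]
    have hnn : ∀ J ∈ (Finset.univ : Finset (Finset V)),
        0 ≤ (if IndepFinset G J then lam ^ J.card else (0:ℝ)) := by
      intro J _
      split <;> positivity
    have h1 := Finset.single_le_sum hnn (Finset.mem_univ (∅ : Finset V))
    have h0 : (if IndepFinset G (∅ : Finset V) then lam ^ (∅ : Finset V).card else (0:ℝ)) = 1 := by
      simp [IndepFinset]
    rw [h0] at h1
    linarith
  have e1 : (∑ I : Finset V,
        if v ∈ I then (if IndepFinset G I then lam ^ I.card else 0) / Z else 0)
      = (∑ I : Finset V,
          if v ∈ I then (if IndepFinset G I then lam ^ I.card else 0) else 0) / Z := by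
    rw [Finset.sum_div]
    refine Finset.sum_congr rfl fun I _ => ?_
    by_cases h2 : v ∈ I <;> simp [h2]
  have e2 : (∑ I : Finset V,
        (if IndepFinset G I then lam ^ I.card else 0) / Z * ((G.neighborFinset v ∩ I).card : ℝ))
      = (∑ I : Finset V,
          (if IndepFinset G I then lam ^ I.card else 0) * ((G.neighborFinset v ∩ I).card : ℝ)) / Z := by
    rw [Finset.sum_div]
    refine Finset.sum_congr rfl fun I _ => ?_
    rw [div_mul_eq_mul_div]
  rw [e1, e2]
  set SA := ∑ I : Finset V,
      if v ∈ I then (if IndepFinset G I then lam ^ I.card else 0) else 0 with hSA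
  set SB := ∑ I : Finset V,
      (if IndepFinset G I then lam ^ I.card else 0) * ((G.neighborFinset v ∩ I).card : ℝ) with hSB
  have e3 : α v * (SA / Z) + β v * (SB / Z) = (α v * SA + β v * SB) / Z := by ring
  rw [e3, le_div_iff₀ hZpos]
  exact main_ineq G hG v (α v) (β v) lam (hα v) (hβ v) hlam
end

section
/- Let G be a finite triangle-free simple graph, λ > 0, and let 𝐈 be a random independent set drawn from the hard-core model on G at fugacity λ. Then for every vertex v ∈ V(G) and every integer j ≥ 0 such that the conditioning event has positive probability, the conditional probability that v is uncovered, given that v has exactly j uncovered neighbours, equals (1+λ)^{-j}. -/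
open Finset

lemma sum_pow_powerset_s5 {V : Type*} [DecidableEq V] (lam : ℝ) (s : Finset V) :
    ∑ t ∈ s.powerset, lam ^ t.card = (1 + lam) ^ s.card := by
  rw [add_comm]
  simpa using (Finset.prod_add (fun _ : V => lam) (fun _ => (1:ℝ)) s).symm

/-- Fact 2 of the paper: in the hard-core model on a triangle-free graph at fugacity
`lam > 0`, conditional on `v` having exactly `j` uncovered neighbours (an event assumed
to have positive probability), the probability that `v` itself is uncovered is
`(1+lam)^{-j}`. -/
theorem hard_core_uncovered_given_j_uncovered_nbrs {V : Type*} [Fintype V] [DecidableEq V]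
    (G : SimpleGraph V) [DecidableRel G.Adj] (hG : G.CliqueFree 3)
    (lam : ℝ) (hlam : 0 < lam) (v : V) (j : ℕ)
    (hpos : 0 < ∑ I : Finset V,
      if ((G.neighborFinset v).filter fun u => G.neighborFinset u ∩ I = ∅).card = j then
        hcProb G lam I else 0) :
    (∑ I : Finset V,
        if G.neighborFinset v ∩ I = ∅ ∧
            ((G.neighborFinset v).filter fun u => G.neighborFinset u ∩ I = ∅).card = j then
          hcProb G lam I else 0) /
      (∑ I : Finset V,
        if ((G.neighborFinset v).filter fun u => G.neighborFinset u ∩ I = ∅).card = j then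
          hcProb G lam I else 0) =
      (1 + lam) ^ (-(j : ℝ)) := by
  classical
  set N := G.neighborFinset v with hN
  have tri : ∀ u ∈ N, ∀ x ∈ N, ¬ G.Adj u x := by
    intro u hu x hx hadj
    rw [hN, SimpleGraph.mem_neighborFinset] at hu hx
    exact hG {v, u, x} (SimpleGraph.is3Clique_triple_iff.mpr ⟨hu, hx, hadj⟩)
  set Z : ℝ := ∑ J : Finset V, if IndepFinset G J then lam ^ J.card else 0 with hZ
  set w : Finset V → ℝ := fun I => if IndepFinset G I then lam ^ I.card else 0 with hw
  have hwnn : ∀ I, 0 ≤ w I := by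
    intro I; rw [hw]; dsimp only; split <;> positivity
  have hZpos : 0 < Z := by
    rw [hZ]
    apply Finset.sum_pos'
    · intro i _; exact hwnn i
    · refine ⟨∅, Finset.mem_univ _, ?_⟩
      simp [IndepFinset]
  -- rewrite hcProb sums
  have hcP : ∀ (P : Finset V → Prop) [DecidablePred P],
      (∑ I : Finset V, if P I then hcProb G lam I else 0)
        = (∑ I : Finset V, if P I then w I else 0) / Z := by
    intro P _
    rw [Finset.sum_div]
    refine Finset.sum_congr rfl fun I _ => ?_
    show (if P I then w I / Z else 0) = (if P I then w I else 0) / Z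
    split <;> simp
  set c : Finset V → ℕ := fun I => (N.filter fun u => G.neighborFinset u ∩ I = ∅).card with hcdef
  set A : ℝ := ∑ I : Finset V, if N ∩ I = ∅ ∧ c I = j then w I else 0 with hA
  set B : ℝ := ∑ I : Finset V, if c I = j then w I else 0 with hB
  rw [hcP, hcP] at *
  have hBZ : 0 < B / Z := hpos
  have hBpos : 0 < B := by
    by_contra h
    push_neg at h
    have : B / Z ≤ 0 := div_nonpos_of_nonpos_of_nonneg h hZpos.le
    linarith
  -- reindexing lemma
  have reindex : ∀ f : Finset V → ℝ,
      (∑ I : Finset V, f I)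
        = ∑ S ∈ Finset.univ.filter (fun S : Finset V => S ∩ N = ∅),
            ∑ T ∈ N.powerset, f (S ∪ T) := by
    intro f
    rw [← Finset.sum_product']
    refine Finset.sum_nbij' (i := fun I => (I \ N, I ∩ N)) (j := fun p => p.1 ∪ p.2)
      ?_ ?_ ?_ ?_ ?_
    · intro I _
      simp only [Finset.mem_product, Finset.mem_filter, Finset.mem_univ, true_and,
        Finset.mem_powerset]
      exact ⟨Finset.sdiff_inter_self N I, Finset.inter_subset_right⟩
    · intro p _; exact Finset.mem_univ _
    · intro I _; exact Finset.sdiff_union_inter I N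
    · intro p hp
      simp only [Finset.mem_product, Finset.mem_filter, Finset.mem_univ, true_and,
        Finset.mem_powerset] at hp
      obtain ⟨hS, hT⟩ := hp
      have h1 : (p.1 ∪ p.2) \ N = p.1 := by
        rw [Finset.union_sdiff_distrib,
          Finset.sdiff_eq_self_of_disjoint (Finset.disjoint_iff_inter_eq_empty.mpr hS),
          Finset.sdiff_eq_empty_iff_subset.mpr hT, Finset.union_empty]
      have h2 : (p.1 ∪ p.2) ∩ N = p.2 := by
        rw [Finset.union_inter_distrib_right, hS, Finset.inter_eq_left.mpr hT,
          Finset.empty_union]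
      exact Prod.ext h1 h2
    · intro I _
      rw [Finset.sdiff_union_inter I N]
  -- per-S facts
  have key : ∀ S : Finset V, S ∩ N = ∅ → ∀ T ∈ N.powerset,
      (N ∩ (S ∪ T) = T) ∧
      (c (S ∪ T) = (N.filter fun u => G.neighborFinset u ∩ S = ∅).card) ∧
      (w (S ∪ T) = if IndepFinset G S ∧ T ⊆ (N.filter fun u => G.neighborFinset u ∩ S = ∅)
          then lam ^ S.card * lam ^ T.card else 0) := by
    intro S hS T hT
    rw [Finset.mem_powerset] at hT
    have hST : Disjoint S T :=
      Finset.disjoint_left.mpr fun a ha hat => by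
        have : a ∈ S ∩ N := Finset.mem_inter.mpr ⟨ha, hT hat⟩
        simp [hS] at this
    have hNuT : ∀ u ∈ N, G.neighborFinset u ∩ T = ∅ := by
      intro u hu
      rw [Finset.eq_empty_iff_forall_notMem]
      intro x hx
      rw [Finset.mem_inter, SimpleGraph.mem_neighborFinset] at hx
      exact tri u hu x (hT hx.2) hx.1
    have hcc : ∀ u ∈ N, (G.neighborFinset u ∩ (S ∪ T) = ∅ ↔ G.neighborFinset u ∩ S = ∅) := by
      intro u hu
      rw [Finset.inter_union_distrib_left, hNuT u hu, Finset.union_empty]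
    refine ⟨?_, ?_, ?_⟩
    · rw [Finset.inter_union_distrib_left, Finset.inter_comm N S, hS,
        Finset.inter_eq_right.mpr hT, Finset.empty_union]
    · show (N.filter fun u => G.neighborFinset u ∩ (S ∪ T) = ∅).card = _
      congr 1
      exact Finset.filter_congr fun u hu => by
        simpa using hcc u hu
    · have hiff : IndepFinset G (S ∪ T) ↔
          (IndepFinset G S ∧ T ⊆ (N.filter fun u => G.neighborFinset u ∩ S = ∅)) := by
        constructor
        · intro h
          refine ⟨fun a ha b hb => h a (Finset.mem_union_left _ ha) b
              (Finset.mem_union_left _ hb), ?_⟩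
          intro u hu
          rw [Finset.mem_filter]
          refine ⟨hT hu, ?_⟩
          rw [Finset.eq_empty_iff_forall_notMem]
          intro x hx
          rw [Finset.mem_inter, SimpleGraph.mem_neighborFinset] at hx
          exact h u (Finset.mem_union_right _ hu) x (Finset.mem_union_left _ hx.2) hx.1
        · rintro ⟨hSi, hTU⟩ a ha b hb hadj
          have hS' : ∀ x ∈ S, ∀ y ∈ T, ¬ G.Adj x y := by
            intro x hx y hy hxy
            have := (Finset.mem_filter.mp (hTU hy)).2
            have : x ∈ G.neighborFinset y ∩ S :=
              Finset.mem_inter.mpr ⟨(SimpleGraph.mem_neighborFinset _ _ _).mpr hxy.symm, hx⟩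
            simp_all
          rcases Finset.mem_union.mp ha with ha' | ha' <;>
            rcases Finset.mem_union.mp hb with hb' | hb'
          · exact hSi a ha' b hb' hadj
          · exact hS' a ha' b hb' hadj
          · exact hS' b hb' a ha' hadj.symm
          · exact tri a (hT ha') b (hT hb') hadj
      show (if IndepFinset G (S ∪ T) then lam ^ (S ∪ T).card else 0) = _
      rw [Finset.card_union_of_disjoint hST, pow_add]
      by_cases h : IndepFinset G (S ∪ T)
      · rw [if_pos h, if_pos (hiff.mp h)]
      · rw [if_neg h, if_neg (fun hh => h (hiff.mpr hh))]
  -- the main identity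
  have hAB : A * (1 + lam) ^ j = B := by
    rw [hA, hB, reindex (fun I => if N ∩ I = ∅ ∧ c I = j then w I else 0),
      reindex (fun I => if c I = j then w I else 0), Finset.sum_mul]
    refine Finset.sum_congr rfl fun S hS => ?_
    rw [Finset.mem_filter] at hS
    have hS := hS.2
    set US := (N.filter fun u => G.neighborFinset u ∩ S = ∅) with hUS
    have hUSN : US ⊆ N := Finset.filter_subset _ _
    have hL : (∑ T ∈ N.powerset,
        if N ∩ (S ∪ T) = ∅ ∧ c (S ∪ T) = j then w (S ∪ T) else 0)
        = if IndepFinset G S ∧ US.card = j then lam ^ S.card else 0 := by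
      rw [Finset.sum_eq_single_of_mem ∅ (Finset.mem_powerset.mpr (Finset.empty_subset _))]
      · obtain ⟨h1, h2, h3⟩ := key S hS ∅ (Finset.mem_powerset.mpr (Finset.empty_subset _))
        rw [h3]
        clear h2
        simp only [Finset.union_empty] at h1 ⊢
        rw [h1]
        have h2 : c S = US.card := rfl
        by_cases hi : IndepFinset G S ∧ US.card = j
        · rw [if_pos ⟨rfl, by rw [h2]; exact hi.2⟩, if_pos ⟨hi.1, Finset.empty_subset _⟩]
          simp [hi]
        · by_cases hc0 : c S = j
          · rw [if_pos ⟨rfl, hc0⟩, if_neg hi]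
            rw [h2] at hc0
            have hni : ¬ IndepFinset G S := fun h => hi ⟨h, hc0⟩
            rw [if_neg (fun hh => hni hh.1)]
          · rw [if_neg (fun hh => hc0 hh.2), if_neg hi]
      · intro T hT hTne
        obtain ⟨h1, _, _⟩ := key S hS T hT
        rw [if_neg]
        rintro ⟨he, _⟩
        rw [h1] at he
        exact hTne he
    have hR : (∑ T ∈ N.powerset, if c (S ∪ T) = j then w (S ∪ T) else 0)
        = if IndepFinset G S ∧ US.card = j then lam ^ S.card * (1 + lam) ^ j else 0 := by
      have step : ∀ T ∈ N.powerset,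
          (if c (S ∪ T) = j then w (S ∪ T) else 0)
            = if IndepFinset G S ∧ US.card = j then
                (if T ⊆ US then lam ^ S.card * lam ^ T.card else 0) else 0 := by
        intro T hT
        obtain ⟨_, h2, h3⟩ := key S hS T hT
        rw [h2, h3]
        by_cases hj : US.card = j
        · by_cases hi : IndepFinset G S
          · simp [← hUS, hj, hi]
          · simp [hj, hi]
        · simp [← hUS, hj]
      rw [Finset.sum_congr rfl step]
      by_cases hi : IndepFinset G S ∧ US.card = j
      · simp only [if_pos hi]
        rw [← Finset.sum_filter]
        have hps : N.powerset.filter (fun T => T ⊆ US) = US.powerset := by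
          ext T
          simp only [Finset.mem_filter, Finset.mem_powerset]
          exact ⟨fun h => h.2, fun h => ⟨h.trans hUSN, h⟩⟩
        rw [hps, ← Finset.mul_sum, sum_pow_powerset_s5, hi.2]
      · simp only [if_neg hi]
        simp
    rw [hL, hR]
    by_cases hi : IndepFinset G S ∧ US.card = j
    · rw [if_pos hi, if_pos hi]
    · rw [if_neg hi, if_neg hi, zero_mul]
  -- finish
  show A / Z / (B / Z) = (1 + lam) ^ (-(j:ℝ))
  have h1l : (0:ℝ) < 1 + lam := by linarith
  rw [Real.rpow_neg h1l.le, Real.rpow_natCast]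
  rw [div_div_div_comm, div_self (ne_of_gt hZpos), div_one,
    div_eq_iff (ne_of_gt hBpos), ← hAB, mul_comm A, ← mul_assoc,
    inv_mul_cancel₀ (pow_ne_zero _ (ne_of_gt h1l)), one_mul]
end

section
/- Let G be a finite triangle-free simple graph, λ > 0, and let 𝐈 be a random independent set drawn from the hard-core model on G at fugacity λ. Fix v ∈ V(G) and let 𝐙 denote the number of uncovered neighbours of v with respect to 𝐈. Then Pr(v ∈ 𝐈) = (λ/(1+λ))·𝔼[(1+λ)^{-𝐙}], and consequently Pr(v ∈ 𝐈) ≥ (λ/(1+λ))·(1+λ)^{-𝔼𝐙}. -/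
open Finset

section HCaux

variable {V : Type*} [Fintype V] [DecidableEq V] (G : SimpleGraph V) [DecidableRel G.Adj]

omit [Fintype V] [DecidableRel G.Adj] in
lemma hc_tri (hG : G.CliqueFree 3) {a b c : V} (hab : G.Adj a b) (hac : G.Adj a c)
    (hbc : G.Adj b c) : False :=
  hG {a, b, c} (SimpleGraph.is3Clique_triple_iff.mpr ⟨hab, hac, hbc⟩)

lemma hc_L1 (lam : ℝ) (v : V) :
    ∑ I ∈ univ.filter (fun I : Finset V => v ∈ I ∧ IndepFinset G I), lam ^ I.card
      = lam * ∑ J ∈ univ.filter (fun J : Finset V =>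
          J ∩ insert v (G.neighborFinset v) = ∅ ∧ IndepFinset G J), lam ^ J.card := by
  rw [Finset.mul_sum]
  refine Finset.sum_nbij' (fun I => I.erase v) (fun J => insert v J) ?_ ?_ ?_ ?_ ?_
  · intro I hI
    rw [Finset.mem_filter] at hI ⊢
    obtain ⟨-, hvI, hInd⟩ := hI
    refine ⟨Finset.mem_univ _, ?_, fun a ha b hb => hInd a (Finset.mem_of_mem_erase ha) b
      (Finset.mem_of_mem_erase hb)⟩
    rw [Finset.eq_empty_iff_forall_notMem]
    intro u hu
    rw [Finset.mem_inter, Finset.mem_insert] at hu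
    obtain ⟨hu1, hu2⟩ := hu
    rcases hu2 with rfl | hu2
    · exact (Finset.notMem_erase u I) hu1
    · rw [SimpleGraph.mem_neighborFinset] at hu2
      exact hInd v hvI u (Finset.mem_of_mem_erase hu1) hu2
  · intro J hJ
    rw [Finset.mem_filter] at hJ ⊢
    obtain ⟨-, hJD, hInd⟩ := hJ
    have hvJ : v ∉ J := by
      intro hv
      have : v ∈ J ∩ insert v (G.neighborFinset v) :=
        Finset.mem_inter.2 ⟨hv, Finset.mem_insert_self _ _⟩
      rw [hJD] at this
      exact Finset.notMem_empty _ this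
    refine ⟨Finset.mem_univ _, Finset.mem_insert_self _ _, ?_⟩
    intro a ha b hb hab
    rw [Finset.mem_insert] at ha hb
    have hnb : ∀ x ∈ J, ¬ G.Adj v x := by
      intro x hx hvx
      have : x ∈ J ∩ insert v (G.neighborFinset v) := Finset.mem_inter.2
        ⟨hx, Finset.mem_insert_of_mem ((SimpleGraph.mem_neighborFinset _ _ _).2 hvx)⟩
      rw [hJD] at this
      exact Finset.notMem_empty _ this
    rcases ha with rfl | ha
    · rcases hb with rfl | hb
      · exact G.irrefl hab
      · exact hnb b hb hab
    · rcases hb with rfl | hb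
      · exact hnb a ha hab.symm
      · exact hInd a ha b hb hab
  · intro I hI
    rw [Finset.mem_filter] at hI
    exact Finset.insert_erase hI.2.1
  · intro J hJ
    rw [Finset.mem_filter] at hJ
    apply Finset.erase_insert
    intro hv
    have : v ∈ J ∩ insert v (G.neighborFinset v) :=
      Finset.mem_inter.2 ⟨hv, Finset.mem_insert_self _ _⟩
    rw [hJ.2.1] at this
    exact Finset.notMem_empty _ this
  · intro I hI
    rw [Finset.mem_filter] at hI
    rw [← Finset.card_erase_add_one hI.2.1, pow_succ]
    ring

lemma hc_L2 (hG : G.CliqueFree 3) (lam : ℝ) (hlam : 0 < lam) (v : V) :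
    ∑ I ∈ univ.filter (fun I : Finset V => v ∉ I ∧ IndepFinset G I),
        lam ^ I.card * (1 + lam) ^
          (-((((G.neighborFinset v).filter fun u => G.neighborFinset u ∩ I = ∅).card : ℝ)))
      = ∑ J ∈ univ.filter (fun J : Finset V =>
          J ∩ insert v (G.neighborFinset v) = ∅ ∧ IndepFinset G J), lam ^ J.card := by
  have h1 : (0:ℝ) < 1 + lam := by linarith
  set N := G.neighborFinset v with hN
  set U : Finset V → Finset V := fun J => N.filter (fun u => G.neighborFinset u ∩ J = ∅)
    with hU
  have hpow : ∀ J : Finset V, ∑ A ∈ (U J).powerset, lam ^ A.card = (1 + lam) ^ (U J).card := by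
    intro J
    have := Finset.prod_add (fun _ : V => lam) (fun _ : V => 1) (U J)
    simp only [Finset.prod_const, Finset.prod_const_one, mul_one, one_pow] at this
    rw [← this, add_comm]
  have hstep : ∀ J : Finset V, lam ^ J.card
      = ∑ A ∈ (U J).powerset, lam ^ A.card * (lam ^ J.card * (1 + lam) ^ (-((U J).card : ℝ))) := by
    intro J
    rw [← Finset.sum_mul, hpow]
    rw [← Real.rpow_natCast (1 + lam) (U J).card]
    rw [mul_comm (lam ^ J.card), ← mul_assoc, ← Real.rpow_add h1, add_neg_cancel,
      Real.rpow_zero, one_mul]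
  rw [Finset.sum_congr rfl (fun J _ => hstep J), Finset.sum_sigma']
  refine Finset.sum_nbij' (fun I => (⟨I \ N, I ∩ N⟩ : (_ : Finset V) × Finset V))
    (fun x => x.1 ∪ x.2) ?_ ?_ ?_ ?_ ?_
  · intro I hI
    rw [Finset.mem_filter] at hI
    obtain ⟨-, hvI, hInd⟩ := hI
    rw [Finset.mem_sigma, Finset.mem_filter, Finset.mem_powerset]
    refine ⟨⟨Finset.mem_univ _, ?_, fun a ha b hb => hInd a (Finset.mem_sdiff.1 ha).1 b
      (Finset.mem_sdiff.1 hb).1⟩, ?_⟩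
    · rw [Finset.eq_empty_iff_forall_notMem]
      intro u hu
      rw [Finset.mem_inter, Finset.mem_sdiff, Finset.mem_insert] at hu
      obtain ⟨⟨huI, huN⟩, hu2⟩ := hu
      rcases hu2 with rfl | hu2
      · exact hvI huI
      · exact huN hu2
    · intro a ha
      rw [Finset.mem_inter] at ha
      rw [Finset.mem_filter]
      refine ⟨ha.2, ?_⟩
      rw [Finset.eq_empty_iff_forall_notMem]
      intro x hx
      rw [Finset.mem_inter, Finset.mem_sdiff] at hx
      exact hInd a ha.1 x hx.2.1 ((SimpleGraph.mem_neighborFinset _ _ _).1 hx.1)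
  · intro x hx
    rw [Finset.mem_sigma, Finset.mem_filter, Finset.mem_powerset] at hx
    obtain ⟨⟨-, hD, hInd⟩, hA⟩ := hx
    obtain ⟨J, A⟩ := x
    simp only at hD hInd hA ⊢
    have hJN : ∀ u ∈ J, u ∉ insert v N := by
      intro u hu hins
      have : u ∈ J ∩ insert v N := Finset.mem_inter.2 ⟨hu, hins⟩
      rw [hD] at this
      exact Finset.notMem_empty _ this
    have hAN : ∀ a ∈ A, a ∈ N := fun a ha => (Finset.mem_filter.1 (hA ha)).1
    have hAJ : ∀ a ∈ A, ∀ x ∈ J, ¬ G.Adj a x := by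
      intro a ha x hx hax
      have h2 := (Finset.mem_filter.1 (hA ha)).2
      have : x ∈ G.neighborFinset a ∩ J :=
        Finset.mem_inter.2 ⟨(SimpleGraph.mem_neighborFinset _ _ _).2 hax, hx⟩
      rw [h2] at this
      exact Finset.notMem_empty _ this
    rw [Finset.mem_filter]
    refine ⟨Finset.mem_univ _, ?_, ?_⟩
    · intro hv
      rw [Finset.mem_union] at hv
      rcases hv with hv | hv
      · exact hJN v hv (Finset.mem_insert_self _ _)
      · exact G.irrefl ((SimpleGraph.mem_neighborFinset _ _ _).1 (hAN v hv))
    · intro a ha b hb hab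
      rw [Finset.mem_union] at ha hb
      rcases ha with ha | ha
      · rcases hb with hb | hb
        · exact hInd a ha b hb hab
        · exact hAJ b hb a ha hab.symm
      · rcases hb with hb | hb
        · exact hAJ a ha b hb hab
        · exact hc_tri G hG ((SimpleGraph.mem_neighborFinset _ _ _).1 (hAN a ha))
            ((SimpleGraph.mem_neighborFinset _ _ _).1 (hAN b hb)) hab
  · intro I hI
    simp only
    exact Finset.sdiff_union_inter I N
  · intro x hx
    rw [Finset.mem_sigma, Finset.mem_filter, Finset.mem_powerset] at hx
    obtain ⟨⟨-, hD, -⟩, hA⟩ := hx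
    obtain ⟨J, A⟩ := x
    simp only at hD hA ⊢
    have hJN : ∀ u ∈ J, u ∉ N := by
      intro u hu hn
      have : u ∈ J ∩ insert v N := Finset.mem_inter.2 ⟨hu, Finset.mem_insert_of_mem hn⟩
      rw [hD] at this
      exact Finset.notMem_empty _ this
    have hAN : ∀ a ∈ A, a ∈ N := fun a ha => (Finset.mem_filter.1 (hA ha)).1
    have h1' : (J ∪ A) \ N = J := by
      ext u
      rw [Finset.mem_sdiff, Finset.mem_union]
      constructor
      · rintro ⟨hu | hu, hn⟩
        · exact hu
        · exact absurd (hAN u hu) hn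
      · intro hu
        exact ⟨Or.inl hu, hJN u hu⟩
    have h2' : (J ∪ A) ∩ N = A := by
      ext u
      rw [Finset.mem_inter, Finset.mem_union]
      constructor
      · rintro ⟨hu | hu, hn⟩
        · exact absurd hn (hJN u hu)
        · exact hu
      · intro hu
        exact ⟨Or.inr hu, hAN u hu⟩
    exact Sigma.ext h1' (heq_of_eq h2')
  · intro I hI
    rw [Finset.mem_filter] at hI
    obtain ⟨-, hvI, hInd⟩ := hI
    simp only
    have hcard : (I \ N).card + (I ∩ N).card = I.card := by
      rw [Finset.card_sdiff_add_card_inter]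
    have hfilt : U I = U (I \ N) := by
      apply Finset.filter_congr
      intro u hu
      have huN : G.Adj v u := (SimpleGraph.mem_neighborFinset _ _ _).1 hu
      constructor
      · intro h
        rw [Finset.eq_empty_iff_forall_notMem] at h ⊢
        intro x hx
        rw [Finset.mem_inter, Finset.mem_sdiff] at hx
        exact h x (Finset.mem_inter.2 ⟨hx.1, hx.2.1⟩)
      · intro h
        rw [Finset.eq_empty_iff_forall_notMem] at h ⊢
        intro x hx
        rw [Finset.mem_inter] at hx
        by_cases hxN : x ∈ N
        · exact hc_tri G hG huN ((SimpleGraph.mem_neighborFinset _ _ _).1 hxN)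
            ((SimpleGraph.mem_neighborFinset _ _ _).1 hx.1) 
        · exact h x (Finset.mem_inter.2 ⟨hx.1, Finset.mem_sdiff.2 ⟨hx.2, hxN⟩⟩)
    rw [← hcard, pow_add]
    have : N.filter (fun u => G.neighborFinset u ∩ I = ∅) = U I := rfl
    rw [this, hfilt]
    ring

end HCaux

/-- In the hard-core model on a triangle-free graph at fugacity `lam > 0`, writing `𝐙`
for the number of uncovered neighbours of a fixed vertex `v`, we have
`Pr(v ∈ 𝐈) = (lam/(1+lam))·𝔼[(1+lam)^{-𝐙}]`, and consequently (by Jensen's inequality)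
`Pr(v ∈ 𝐈) ≥ (lam/(1+lam))·(1+lam)^{-𝔼𝐙}`. -/
theorem hard_core_occupancy_formula {V : Type*} [Fintype V] [DecidableEq V]
    (G : SimpleGraph V) [DecidableRel G.Adj] (hG : G.CliqueFree 3)
    (lam : ℝ) (hlam : 0 < lam) (v : V) :
    (∑ I : Finset V, if v ∈ I then hcProb G lam I else 0) =
      lam / (1 + lam) *
        ∑ I : Finset V, hcProb G lam I *
          (1 + lam) ^
            (-((((G.neighborFinset v).filter fun u =>
                G.neighborFinset u ∩ I = ∅).card : ℝ))) ∧
    lam / (1 + lam) *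
        (1 + lam) ^
          (-(∑ I : Finset V, hcProb G lam I *
            ((((G.neighborFinset v).filter fun u =>
                G.neighborFinset u ∩ I = ∅).card : ℝ)))) ≤
      ∑ I : Finset V, if v ∈ I then hcProb G lam I else 0 := by
  have h1 : (0:ℝ) < 1 + lam := by linarith
  set w : Finset V → ℝ := fun I => if IndepFinset G I then lam ^ I.card else 0 with hw
  set r : Finset V → ℝ := fun I => (1 + lam) ^
    (-((((G.neighborFinset v).filter fun u => G.neighborFinset u ∩ I = ∅).card : ℝ))) with hr
  set Zc : Finset V → ℝ := fun I =>
    ((((G.neighborFinset v).filter fun u => G.neighborFinset u ∩ I = ∅).card : ℝ)) with hZc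
  have hwnn : ∀ I, 0 ≤ w I := by
    intro I
    rw [hw]
    dsimp only
    split
    · positivity
    · exact le_refl 0
  have hZpos : (0:ℝ) < ∑ J : Finset V, w J := by
    apply Finset.sum_pos' (fun J _ => hwnn J)
    refine ⟨∅, Finset.mem_univ _, ?_⟩
    rw [hw]
    have : IndepFinset G (∅ : Finset V) := fun u hu => absurd hu (Finset.notMem_empty u)
    simp [this]
  set Z : ℝ := ∑ J : Finset V, w J with hZdef
  have hprob : ∀ I, hcProb G lam I = w I / Z := fun I => rfl
  -- key sum identity
  have key : (∑ I : Finset V, if v ∈ I then w I else 0) * (1 + lam)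
      = lam * ∑ I : Finset V, w I * r I := by
    have hs2 : ∑ I : Finset V, w I * r I
        = ∑ I ∈ univ.filter (fun I : Finset V => v ∈ I), w I * r I
          + ∑ I ∈ univ.filter (fun I : Finset V => ¬ v ∈ I), w I * r I :=
      (Finset.sum_filter_add_sum_filter_not _ _ _).symm
    have hsa : ∑ I ∈ univ.filter (fun I : Finset V => v ∈ I), w I * r I
        = ∑ I ∈ univ.filter (fun I : Finset V => v ∈ I ∧ IndepFinset G I), lam ^ I.card := by
      conv_rhs => rw [← Finset.filter_filter, Finset.sum_filter]
      apply Finset.sum_congr rfl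
      intro I hI
      rw [Finset.mem_filter] at hI
      by_cases hInd : IndepFinset G I
      · have hr1 : r I = 1 := by
          rw [hr]
          dsimp only
          have : (G.neighborFinset v).filter (fun u => G.neighborFinset u ∩ I = ∅) = ∅ := by
            rw [Finset.filter_eq_empty_iff]
            intro u hu heq
            have : v ∈ G.neighborFinset u ∩ I := Finset.mem_inter.2
              ⟨(SimpleGraph.mem_neighborFinset _ _ _).2
                ((SimpleGraph.mem_neighborFinset _ _ _).1 hu).symm, hI.2⟩
            rw [heq] at this
            exact Finset.notMem_empty _ this
          rw [this]
          simp
        simp [hw, hInd, hr1]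
      · simp [hw, hInd]
    have hsb : ∑ I ∈ univ.filter (fun I : Finset V => ¬ v ∈ I), w I * r I
        = ∑ I ∈ univ.filter (fun I : Finset V => ¬ v ∈ I ∧ IndepFinset G I),
            lam ^ I.card * r I := by
      conv_rhs => rw [← Finset.filter_filter, Finset.sum_filter]
      apply Finset.sum_congr rfl
      intro I hI
      by_cases hInd : IndepFinset G I
      · simp [hw, hInd]
      · simp [hw, hInd]
    have hs1 : (∑ I : Finset V, if v ∈ I then w I else 0)
        = ∑ I ∈ univ.filter (fun I : Finset V => v ∈ I ∧ IndepFinset G I), lam ^ I.card := by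
      conv_rhs => rw [Finset.sum_filter]
      apply Finset.sum_congr rfl
      intro I _
      by_cases hv : v ∈ I <;> by_cases hInd : IndepFinset G I <;> simp [hw, hv, hInd]
    have hL1 := hc_L1 G lam v
    have hL2 := hc_L2 G hG lam hlam v
    rw [hs2, hsa, hsb, hs1, hL1, hL2]
    ring
  have goal1 : (∑ I : Finset V, if v ∈ I then hcProb G lam I else 0) =
      lam / (1 + lam) * ∑ I : Finset V, hcProb G lam I * r I := by
    have e1 : (∑ I : Finset V, if v ∈ I then hcProb G lam I else 0)
        = (∑ I : Finset V, if v ∈ I then w I else 0) / Z := by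
      rw [Finset.sum_div]
      apply Finset.sum_congr rfl
      intro I _
      rw [hprob]
      split <;> simp
    have e2 : (∑ I : Finset V, hcProb G lam I * r I) = (∑ I : Finset V, w I * r I) / Z := by
      rw [Finset.sum_div]
      apply Finset.sum_congr rfl
      intro I _
      rw [hprob, div_mul_eq_mul_div]
    rw [e1, e2, div_mul_div_comm]
    rw [show lam * ∑ I : Finset V, w I * r I
        = (1 + lam) * (∑ I : Finset V, if v ∈ I then w I else 0) by rw [← key]; ring]
    rw [mul_div_mul_left _ _ (ne_of_gt h1)]
  constructor
  · exact goal1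
  · -- Jensen
    have hsum1 : ∑ I : Finset V, hcProb G lam I = 1 := by
      have : ∀ I, hcProb G lam I = w I / Z := hprob
      rw [Finset.sum_congr rfl (fun I _ => hprob I), ← Finset.sum_div, ← hZdef,
        div_self (ne_of_gt hZpos)]
    have hnn : ∀ I ∈ (univ : Finset (Finset V)), 0 ≤ hcProb G lam I := by
      intro I _
      rw [hprob]
      exact div_nonneg (hwnn I) (le_of_lt hZpos)
    have hconv : ConvexOn ℝ (Set.univ : Set ℝ) (fun t : ℝ => (1 + lam) ^ t) := by
      have hA := convexOn_exp.comp_affineMap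
        (LinearMap.toAffineMap ((Real.log (1 + lam)) • (LinearMap.id : ℝ →ₗ[ℝ] ℝ)))
      rw [Set.preimage_univ] at hA
      have hA' : ConvexOn ℝ (Set.univ : Set ℝ) (Real.exp ∘
          ⇑(LinearMap.toAffineMap ((Real.log (1 + lam)) • (LinearMap.id : ℝ →ₗ[ℝ] ℝ)))) := hA
      convert hA' using 1
      funext t
      simp only [Function.comp_apply, LinearMap.coe_toAffineMap, LinearMap.smul_apply,
        LinearMap.id_coe, id_eq, smul_eq_mul]
      rw [Real.rpow_def_of_pos h1]
    have hjen := hconv.map_sum_le (t := (univ : Finset (Finset V)))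
      (w := fun I => hcProb G lam I) (p := fun I => -(Zc I)) hnn hsum1
      (fun i _ => Set.mem_univ _)
    simp only [smul_eq_mul] at hjen
    have hsumneg : ∑ I : Finset V, hcProb G lam I * (-(Zc I))
        = -(∑ I : Finset V, hcProb G lam I * Zc I) := by
      rw [← Finset.sum_neg_distrib]
      apply Finset.sum_congr rfl
      intro I _
      ring
    rw [hsumneg] at hjen
    have := mul_le_mul_of_nonneg_left hjen
      (le_of_lt (div_pos hlam h1) : (0:ℝ) ≤ lam / (1 + lam))
    rw [goal1]
    exact this
end

section
/- Let G be a finite triangle-free simple graph, λ > 0, and let 𝐈 be a random independent set drawn from the hard-core model on G at fugacity λ. Fix v ∈ V(G) and let 𝐙 denote the number of uncovered neighbours of v with respect to 𝐈. Then 𝔼|N(v) ∩ 𝐈| = (λ/(1+λ))·𝔼𝐙. -/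
section Aux
open Finset
variable {V : Type*} [Fintype V] [DecidableEq V] (G : SimpleGraph V) [DecidableRel G.Adj]
  (lam : ℝ)

lemma key1 (u : V) :
    (∑ I : Finset V, if IndepFinset G I ∧ u ∈ I then lam ^ I.card else 0)
      = lam * ∑ I : Finset V,
          if IndepFinset G I ∧ u ∉ I ∧ G.neighborFinset u ∩ I = ∅ then lam ^ I.card else 0 := by
  rw [← Finset.sum_filter, ← Finset.sum_filter, Finset.mul_sum]
  refine Finset.sum_bij' (fun I _ => I.erase u) (fun J _ => insert u J) ?_ ?_ ?_ ?_ ?_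
  · rintro I hI
    simp only [mem_filter, mem_univ, true_and] at hI ⊢
    obtain ⟨hind, hu⟩ := hI
    refine ⟨fun a ha b hb => hind a (Finset.mem_of_mem_erase ha) b (Finset.mem_of_mem_erase hb),
      Finset.notMem_erase u I, ?_⟩
    ext w
    simp only [Finset.mem_inter, SimpleGraph.mem_neighborFinset, Finset.mem_erase,
      Finset.notMem_empty, iff_false]
    rintro ⟨hadj, -, hwI⟩
    exact hind u hu w hwI hadj
  · rintro J hJ
    simp only [mem_filter, mem_univ, true_and] at hJ ⊢
    obtain ⟨hind, hu, hN⟩ := hJ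
    refine ⟨?_, Finset.mem_insert_self u J⟩
    intro a ha b hb hab
    rcases Finset.mem_insert.1 ha with ha' | ha' <;> rcases Finset.mem_insert.1 hb with hb' | hb'
    · rw [ha', hb'] at hab; exact G.loopless.irrefl u hab
    · exact (Finset.eq_empty_iff_forall_notMem.1 hN b)
        (Finset.mem_inter.2 ⟨(SimpleGraph.mem_neighborFinset ..).2 (ha' ▸ hab : G.Adj u b), hb'⟩)
    · exact (Finset.eq_empty_iff_forall_notMem.1 hN a)
        (Finset.mem_inter.2 ⟨(SimpleGraph.mem_neighborFinset ..).2 (hb' ▸ hab : G.Adj a u).symm, ha'⟩)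
    · exact hind a ha' b hb' hab
  · rintro I hI
    simp only [mem_filter, mem_univ, true_and] at hI
    exact Finset.insert_erase hI.2
  · rintro J hJ
    simp only [mem_filter, mem_univ, true_and] at hJ
    exact Finset.erase_insert hJ.2.1
  · rintro I hI
    simp only [mem_filter, mem_univ, true_and] at hI
    rw [← Finset.card_erase_add_one hI.2, pow_succ, mul_comm]

lemma key2 (u : V) :
    (∑ I : Finset V, if IndepFinset G I ∧ G.neighborFinset u ∩ I = ∅ then lam ^ I.card else 0)
      = (∑ I : Finset V, if IndepFinset G I ∧ u ∈ I then lam ^ I.card else 0)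
        + ∑ I : Finset V,
            if IndepFinset G I ∧ u ∉ I ∧ G.neighborFinset u ∩ I = ∅ then lam ^ I.card else 0 := by
  rw [← Finset.sum_add_distrib]
  refine Finset.sum_congr rfl fun I _ => ?_
  by_cases hu : u ∈ I
  · by_cases hind : IndepFinset G I
    · have hN : G.neighborFinset u ∩ I = ∅ := by
        ext w
        simp only [Finset.mem_inter, SimpleGraph.mem_neighborFinset, Finset.notMem_empty,
          iff_false, not_and]
        exact fun hadj hw => hind u hu w hw hadj
      simp [hu, hind, hN]
    · simp [hind]
  · simp [hu]

lemma key3 (hlam : 0 < lam) (u : V) :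
    (∑ I : Finset V, if IndepFinset G I ∧ u ∈ I then lam ^ I.card else 0)
      = lam / (1 + lam) *
        ∑ I : Finset V, if IndepFinset G I ∧ G.neighborFinset u ∩ I = ∅ then lam ^ I.card else 0 := by
  rw [key2, key1]
  have h : (1 : ℝ) + lam ≠ 0 := by linarith
  field_simp
  ring


end Aux

/-- In the hard-core model on a triangle-free graph at fugacity `lam > 0`, writing `𝐙`
for the number of uncovered neighbours of a fixed vertex `v`, the expected number of
occupied neighbours of `v` satisfies `𝔼|N(v) ∩ 𝐈| = (lam/(1+lam))·𝔼𝐙`. -/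


theorem hard_core_expected_occupied_neighbours {V : Type*} [Fintype V] [DecidableEq V]
    (G : SimpleGraph V) [DecidableRel G.Adj] (hG : G.CliqueFree 3)
    (lam : ℝ) (hlam : 0 < lam) (v : V) :
    (∑ I : Finset V, hcProb G lam I * ((G.neighborFinset v ∩ I).card : ℝ)) =
      lam / (1 + lam) *
        ∑ I : Finset V, hcProb G lam I *
          ((((G.neighborFinset v).filter fun u =>
              G.neighborFinset u ∩ I = ∅).card : ℝ)) := by
  have key : (∑ I : Finset V, (if IndepFinset G I then lam ^ I.card else 0) *
        ((G.neighborFinset v ∩ I).card : ℝ))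
      = lam / (1 + lam) *
        ∑ I : Finset V, (if IndepFinset G I then lam ^ I.card else 0) *
          ((((G.neighborFinset v).filter fun u =>
              G.neighborFinset u ∩ I = ∅).card : ℝ)) := by
    have hcard : ∀ I : Finset V, ((G.neighborFinset v ∩ I).card : ℝ)
        = ∑ u ∈ G.neighborFinset v, if u ∈ I then (1:ℝ) else 0 := by
      intro I
      rw [← Finset.filter_mem_eq_inter, Finset.card_filter]
      push_cast
      simp
    have hcard2 : ∀ I : Finset V, ((((G.neighborFinset v).filter fun u =>
          G.neighborFinset u ∩ I = ∅).card : ℝ))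
        = ∑ u ∈ G.neighborFinset v, if G.neighborFinset u ∩ I = ∅ then (1:ℝ) else 0 := by
      intro I
      rw [Finset.card_filter]
      push_cast
      simp
    have lhs : ∀ I : Finset V, (if IndepFinset G I then lam ^ I.card else 0) *
        (∑ u ∈ G.neighborFinset v, if u ∈ I then (1:ℝ) else 0)
        = ∑ u ∈ G.neighborFinset v, if IndepFinset G I ∧ u ∈ I then lam ^ I.card else 0 := by
      intro I
      rw [Finset.mul_sum]
      refine Finset.sum_congr rfl fun u _ => ?_
      by_cases hind : IndepFinset G I <;> by_cases hu : u ∈ I <;> simp [hind, hu]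
    have rhs : ∀ I : Finset V, (if IndepFinset G I then lam ^ I.card else 0) *
        (∑ u ∈ G.neighborFinset v, if G.neighborFinset u ∩ I = ∅ then (1:ℝ) else 0)
        = ∑ u ∈ G.neighborFinset v,
            if IndepFinset G I ∧ G.neighborFinset u ∩ I = ∅ then lam ^ I.card else 0 := by
      intro I
      rw [Finset.mul_sum]
      refine Finset.sum_congr rfl fun u _ => ?_
      by_cases hind : IndepFinset G I <;> by_cases hu : G.neighborFinset u ∩ I = ∅ <;>
        simp [hind, hu]
    calc (∑ I : Finset V, (if IndepFinset G I then lam ^ I.card else 0) *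
            ((G.neighborFinset v ∩ I).card : ℝ))
        = ∑ u ∈ G.neighborFinset v, ∑ I : Finset V,
            if IndepFinset G I ∧ u ∈ I then lam ^ I.card else 0 := by
          simp only [hcard, lhs]; exact Finset.sum_comm
      _ = ∑ u ∈ G.neighborFinset v, lam / (1 + lam) * ∑ I : Finset V,
            if IndepFinset G I ∧ G.neighborFinset u ∩ I = ∅ then lam ^ I.card else 0 :=
          Finset.sum_congr rfl fun u _ => key3 G lam hlam u
      _ = lam / (1 + lam) *
            ∑ I : Finset V, (if IndepFinset G I then lam ^ I.card else 0) *
              ((((G.neighborFinset v).filter fun u =>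
                  G.neighborFinset u ∩ I = ∅).card : ℝ)) := by
          rw [← Finset.mul_sum]
          congr 1
          simp only [hcard2, rhs]
          exact Finset.sum_comm
  simp only [hcProb, div_mul_eq_mul_div, ← Finset.sum_div]
  rw [key]; ring
end

section
/- Let G be a finite triangle-free simple graph on n vertices with minimum degree at least 1, let λ > 0 and α, β > 0, and let 𝐈 be a random independent set drawn from the hard-core model on G at fugacity λ. Let 𝐗 = Σ_{v∈𝐈} deg(v) be the number of edges of G between 𝐈 and V(G)\𝐈. Then 𝔼𝐗 ≥ n·λ·((1/n)·Σ_{v∈V(G)} log deg(v) + log(α/β) + log log(1+λ) + 1) / ((1 + α/β)·(1+λ)·log(1+λ)). -/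
open Finset


lemma hc_sum_pow {V : Type*} [DecidableEq V] (x : ℝ) (U : Finset V) :
    ∑ S ∈ U.powerset, x ^ S.card = (1 + x) ^ U.card := by
  classical
  induction U using Finset.induction_on with
  | empty => simp
  | insert a U ha ih =>
    rw [Finset.sum_powerset_insert ha, card_insert_of_notMem ha]
    have h2 : ∑ S ∈ U.powerset, x ^ (insert a S).card = ∑ S ∈ U.powerset, x * x ^ S.card := by
      refine Finset.sum_congr rfl fun S hS => ?_
      rw [card_insert_of_notMem (fun h => ha (mem_powerset.mp hS h))]
      ring
    rw [h2, ← Finset.mul_sum, ih, pow_succ]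
    ring

lemma hc_sum_card_pow {V : Type*} [DecidableEq V] (x : ℝ) (U : Finset V) :
    (1 + x) * ∑ S ∈ U.powerset, (S.card : ℝ) * x ^ S.card
      = (U.card : ℝ) * x * (1 + x) ^ U.card := by
  classical
  induction U using Finset.induction_on with
  | empty => simp
  | insert a U ha ih =>
    rw [Finset.sum_powerset_insert ha, card_insert_of_notMem ha]
    have h2 : ∑ S ∈ U.powerset, ((insert a S).card : ℝ) * x ^ (insert a S).card
        = ∑ S ∈ U.powerset, (x * ((S.card : ℝ) * x ^ S.card) + x * x ^ S.card) := by
      refine Finset.sum_congr rfl fun S hS => ?_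
      rw [card_insert_of_notMem (fun h => ha (mem_powerset.mp hS h))]
      push_cast
      ring
    rw [h2, Finset.sum_add_distrib, ← Finset.mul_sum, ← Finset.mul_sum, hc_sum_pow]
    push_cast
    rw [pow_succ]
    linear_combination (1+x) * ih

lemma hc_core (γ d L lam W : ℝ) (hγ : 0 < γ) (hd : 1 ≤ d) (hL : 0 < L)
    (hlam : 0 < lam) (hW : 1 ≤ W) :
    (1 + Real.log (γ * d * L)) * (lam + W) ≤ γ * d * (1 + lam) * L + Real.log W * W := by
  have hd0 : (0:ℝ) < d := lt_of_lt_of_le one_pos hd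
  have hdL : 0 < γ * d * L := by positivity
  have hW0 : 0 < W := lt_of_lt_of_le one_pos hW
  set C := 1 + Real.log (γ * d * L) with hC
  have hexp : Real.exp (C - 1 - Real.log W) = γ * d * L / W := by
    rw [Real.exp_sub]
    rw [show C - 1 = Real.log (γ * d * L) by rw [hC]; ring]
    rw [Real.exp_log hdL, Real.exp_log hW0]
  have hx := Real.add_one_le_exp (C - 1 - Real.log W)
  rw [hexp] at hx
  have h1 : (C - Real.log W) * W ≤ γ * d * L := by
    have : C - Real.log W ≤ γ * d * L / W := by linarith
    calc (C - Real.log W) * W ≤ (γ * d * L / W) * W :=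
          mul_le_mul_of_nonneg_right this (le_of_lt hW0)
      _ = γ * d * L := by field_simp
  have h2 : C ≤ γ * d * L := by
    have := Real.log_le_sub_one_of_pos hdL
    rw [hC]; linarith
  nlinarith [mul_le_mul_of_nonneg_right h2 (le_of_lt hlam)]

lemma hc_fiber_ineq (lam α β d : ℝ) (hlam : 0 < lam) (hα : 0 < α) (hβ : 0 < β)
    (hd : 1 ≤ d) (Z : ℕ) (A : ℝ)
    (hA : (1 + lam) * A = (Z : ℝ) * lam * (1 + lam) ^ Z) :
    (α + β) * (lam * (Real.log d + Real.log (α/β) + Real.log (Real.log (1+lam)) + 1)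
        / ((1 + α/β) * (1+lam) * Real.log (1+lam))) * (lam + (1+lam)^Z)
      ≤ α * d * lam + β * A := by
  have hd0 : (0:ℝ) < d := lt_of_lt_of_le one_pos hd
  set γ := α / β with hγdef
  set L := Real.log (1 + lam) with hLdef
  set W := (1 + lam) ^ Z with hWdef
  have hL : 0 < L := Real.log_pos (by linarith)
  have hγ : 0 < γ := div_pos hα hβ
  have hW : 1 ≤ W := one_le_pow₀ (by linarith : (1:ℝ) ≤ 1 + lam)
  have hlogs : Real.log d + Real.log γ + Real.log L + 1 = 1 + Real.log (γ * d * L) := by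
    rw [Real.log_mul (by positivity) (ne_of_gt hL), Real.log_mul (ne_of_gt hγ) (ne_of_gt hd0)]
    ring
  have hcore := hc_core γ d L lam W hγ hd hL hlam hW
  have hlogW : Real.log W = (Z : ℝ) * L := by rw [hWdef, Real.log_pow, hLdef]
  rw [hlogW] at hcore
  have hβγ : β * γ = α := by rw [hγdef]; field_simp
  have hγ1 : (0:ℝ) < 1 + γ := by linarith
  have key : (α+β) * (lam * (Real.log d + Real.log γ + Real.log L + 1)
        / ((1+γ)*(1+lam)*L)) * (lam + W) * (1+lam)
      = β * lam * ((1 + Real.log (γ*d*L)) * (lam + W)) / L := by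
    rw [hlogs, ← hβγ]
    field_simp
    ring
  have h2 : (α+β) * (lam * (Real.log d + Real.log γ + Real.log L + 1)
        / ((1+γ)*(1+lam)*L)) * (lam + W) * (1+lam)
      ≤ (α * d * lam + β * A) * (1+lam) := by
    rw [key, div_le_iff₀ hL]
    have hstep := mul_le_mul_of_nonneg_left hcore (by positivity : (0:ℝ) ≤ β * lam)
    calc β * lam * ((1 + Real.log (γ*d*L)) * (lam + W))
        ≤ β * lam * (γ * d * (1 + lam) * L + (Z:ℝ) * L * W) := hstep
      _ = (β * γ * d * lam + β * A) * ((1+lam) * L) := by linear_combination (-(β*L)) * hA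
      _ = (α * d * lam + β * A) * ((1+lam) * L) := by rw [hβγ]
      _ = (α * d * lam + β * A) * (1+lam) * L := by ring
  exact le_of_mul_le_mul_right h2 (by linarith)

lemma hc_fiber_eq {V : Type*} [Fintype V] [DecidableEq V] (G : SimpleGraph V)
    [DecidableRel G.Adj] (hG : G.CliqueFree 3) (v : V) (J : Finset V)
    (hJ : IndepFinset G J) (hJd : Disjoint J (insert v (G.neighborFinset v))) :
    (univ.filter fun I : Finset V => IndepFinset G I).filter
        (fun I => I \ insert v (G.neighborFinset v) = J)
      = insert (insert v J)
          (((G.neighborFinset v).filter fun u => ∀ w ∈ J, ¬ G.Adj u w).powerset.image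
            (fun S => J ∪ S)) := by
  set cl := insert v (G.neighborFinset v) with hcl
  set U := (G.neighborFinset v).filter fun u => ∀ w ∈ J, ¬ G.Adj u w with hU
  have hJcl : ∀ w ∈ J, w ∉ cl := fun w hw hwc =>
    (Finset.disjoint_left.mp hJd) hw hwc
  have hJnb : ∀ w ∈ J, ¬ G.Adj v w := fun w hw hadj =>
    hJcl w hw (by simp [hcl, SimpleGraph.mem_neighborFinset, hadj])
  ext I
  simp only [mem_filter, mem_univ, true_and, mem_insert, mem_image, mem_powerset]
  constructor
  · rintro ⟨hI, hg⟩
    by_cases hv : v ∈ I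
    · left
      apply Finset.Subset.antisymm
      · intro u hu
        rcases eq_or_ne u v with rfl | hne
        · exact mem_insert_self _ _
        · apply mem_insert_of_mem
          rw [← hg, mem_sdiff]
          refine ⟨hu, fun huc => ?_⟩
          rw [hcl, mem_insert] at huc
          rcases huc with rfl | hunb
          · exact hne rfl
          · exact hI v hv u hu ((SimpleGraph.mem_neighborFinset _ _ _).mp hunb)
      · intro u hu
        rcases mem_insert.mp hu with rfl | hu
        · exact hv
        · rw [← hg, mem_sdiff] at hu; exact hu.1
    · right
      refine ⟨I ∩ G.neighborFinset v, ?_, ?_⟩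
      · intro u hu
        rw [mem_inter] at hu
        rw [hU, mem_filter]
        refine ⟨hu.2, fun w hw hadj => ?_⟩
        rw [← hg, mem_sdiff] at hw
        exact hI u hu.1 w hw.1 hadj
      · apply Finset.Subset.antisymm
        · intro u hu
          rcases mem_union.mp hu with hu | hu
          · rw [← hg, mem_sdiff] at hu; exact hu.1
          · exact (mem_inter.mp hu).1
        · intro u hu
          by_cases huc : u ∈ cl
          · rw [hcl, mem_insert] at huc
            rcases huc with rfl | hunb
            · exact absurd hu hv
            · exact mem_union_right _ (mem_inter.mpr ⟨hu, hunb⟩)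
          · exact mem_union_left _ (by rw [← hg, mem_sdiff]; exact ⟨hu, huc⟩)
  · rintro (rfl | ⟨S, hS, rfl⟩)
    · constructor
      · intro a ha b hb hadj
        rcases mem_insert.mp ha with ha' | ha' <;> rcases mem_insert.mp hb with hb' | hb'
        · rw [ha', hb'] at hadj; exact G.irrefl hadj
        · rw [ha'] at hadj; exact hJnb b hb' hadj
        · rw [hb'] at hadj; exact hJnb a ha' hadj.symm
        · exact hJ a ha' b hb' hadj
      · ext u
        rw [mem_sdiff, mem_insert]
        constructor
        · rintro ⟨rfl | hu, huc⟩
          · exact absurd (mem_insert_self _ _) huc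
          · exact hu
        · exact fun hu => ⟨Or.inr hu, hJcl u hu⟩
    · have hSnb : ∀ u ∈ S, u ∈ G.neighborFinset v := fun u hu =>
        (mem_filter.mp (hS hu)).1
      have hSun : ∀ u ∈ S, ∀ w ∈ J, ¬ G.Adj u w := fun u hu =>
        (mem_filter.mp (hS hu)).2
      constructor
      · intro a ha b hb hadj
        rcases mem_union.mp ha with ha | ha <;> rcases mem_union.mp hb with hb | hb
        · exact hJ a ha b hb hadj
        · exact hSun b hb a ha hadj.symm
        · exact hSun a ha b hb hadj
        · -- a, b ∈ S ⊆ N(v): triangle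
          have hva := (SimpleGraph.mem_neighborFinset _ _ _).mp (hSnb a ha)
          have hvb := (SimpleGraph.mem_neighborFinset _ _ _).mp (hSnb b hb)
          exact hG {v, a, b} (SimpleGraph.is3Clique_triple_iff.mpr ⟨hva, hvb, hadj⟩)
      · ext u
        rw [mem_sdiff, mem_union]
        constructor
        · rintro ⟨hu | hu, huc⟩
          · exact hu
          · exact absurd (mem_insert_of_mem (hSnb u hu)) huc
        · exact fun hu => ⟨Or.inl hu, hJcl u hu⟩

section PV
variable {V : Type*} [Fintype V] [DecidableEq V] (G : SimpleGraph V) [DecidableRel G.Adj]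

lemma hc_per_vertex (hG : G.CliqueFree 3) (v : V) (hdv : 1 ≤ G.degree v)
    (lam α β : ℝ) (hlam : 0 < lam) (hα : 0 < α) (hβ : 0 < β) :
    (α + β) * (lam * (Real.log (G.degree v) + Real.log (α/β)
          + Real.log (Real.log (1+lam)) + 1)
        / ((1 + α/β) * (1+lam) * Real.log (1+lam)))
      * ∑ I ∈ univ.filter (fun I : Finset V => IndepFinset G I), lam ^ I.card
    ≤ ∑ I ∈ univ.filter (fun I : Finset V => IndepFinset G I),
        lam ^ I.card * (α * (G.degree v) * (if v ∈ I then 1 else 0)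
          + β * (((G.neighborFinset v ∩ I).card : ℝ))) := by
  have hd : (1:ℝ) ≤ (G.degree v : ℝ) := by exact_mod_cast hdv
  rw [← Finset.sum_fiberwise_of_maps_to
      (g := fun I : Finset V => I \ insert v (G.neighborFinset v))
      (t := (univ : Finset (Finset V))) (fun _ _ => mem_univ _)
      (fun I : Finset V => lam ^ I.card)]
  rw [← Finset.sum_fiberwise_of_maps_to
      (g := fun I : Finset V => I \ insert v (G.neighborFinset v))
      (t := (univ : Finset (Finset V))) (fun _ _ => mem_univ _)
      (fun I : Finset V => lam ^ I.card * (α * (G.degree v) * (if v ∈ I then 1 else 0)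
          + β * (((G.neighborFinset v ∩ I).card : ℝ))))]
  rw [Finset.mul_sum]
  refine Finset.sum_le_sum fun J _ => ?_
  rcases Finset.eq_empty_or_nonempty
      ((univ.filter fun I : Finset V => IndepFinset G I).filter
        (fun I => I \ insert v (G.neighborFinset v) = J)) with he | ⟨I₀, hI₀⟩
  · rw [he]; simp
  · have hmem := Finset.mem_filter.mp hI₀
    have hI₀ind : IndepFinset G I₀ := (Finset.mem_filter.mp hmem.1).2
    have hgJ : I₀ \ insert v (G.neighborFinset v) = J := hmem.2
    have hJsub : J ⊆ I₀ := hgJ ▸ sdiff_subset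
    have hJind : IndepFinset G J := fun a ha b hb => hI₀ind a (hJsub ha) b (hJsub hb)
    have hJd : Disjoint J (insert v (G.neighborFinset v)) := hgJ ▸ sdiff_disjoint
    rw [hc_fiber_eq G hG v J hJind hJd]
    set U := (G.neighborFinset v).filter (fun u => ∀ w ∈ J, ¬ G.Adj u w) with hU
    have hUnb : U ⊆ G.neighborFinset v := filter_subset _ _
    have hvJ : v ∉ J := fun h => (Finset.disjoint_left.mp hJd) h (mem_insert_self _ _)
    have hJnb : ∀ u ∈ J, u ∉ G.neighborFinset v := fun u hu hadj =>
      (Finset.disjoint_left.mp hJd) hu (mem_insert_of_mem hadj)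
    have hvnb : v ∉ G.neighborFinset v := by
      simp [SimpleGraph.mem_neighborFinset]
    have hnotmem : insert v J ∉ U.powerset.image (fun S => J ∪ S) := by
      intro h
      obtain ⟨S, hS, hSe⟩ := Finset.mem_image.mp h
      have hv : v ∈ J ∪ S := hSe.symm ▸ mem_insert_self v J
      rcases mem_union.mp hv with hv | hv
      · exact hvJ hv
      · exact hvnb (hUnb (mem_powerset.mp hS hv))
    have hinj : ∀ S ∈ U.powerset, ∀ S' ∈ U.powerset, J ∪ S = J ∪ S' → S = S' := by
      intro S hS S' hS' hE
      ext u
      constructor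
      · intro hu
        rcases mem_union.mp (hE ▸ mem_union_right J hu) with h | h
        · exact absurd (hUnb (mem_powerset.mp hS hu)) (hJnb u h)
        · exact h
      · intro hu
        rcases mem_union.mp (hE.symm ▸ mem_union_right J hu) with h | h
        · exact absurd (hUnb (mem_powerset.mp hS' hu)) (hJnb u h)
        · exact h
    rw [Finset.sum_insert hnotmem, Finset.sum_insert hnotmem,
        Finset.sum_image hinj, Finset.sum_image hinj]
    -- card facts
    have hcardvJ : (insert v J).card = J.card + 1 := card_insert_of_notMem hvJ
    have hNvJ : G.neighborFinset v ∩ insert v J = ∅ := by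
      ext u
      simp only [mem_inter, mem_insert, notMem_empty, iff_false, not_and]
      rintro hu (rfl | huJ)
      · exact hvnb hu
      · exact hJnb u huJ hu
    have hJS : ∀ S ∈ U.powerset, (J ∪ S).card = J.card + S.card := by
      intro S hS
      exact card_union_of_disjoint (Finset.disjoint_left.mpr fun u hu h =>
        hJnb u hu (hUnb (mem_powerset.mp hS h)))
    have hvJS : ∀ S ∈ U.powerset, v ∉ J ∪ S := by
      intro S hS h
      rcases mem_union.mp h with h | h
      · exact hvJ h
      · exact hvnb (hUnb (mem_powerset.mp hS h))
    have hNJS : ∀ S ∈ U.powerset, G.neighborFinset v ∩ (J ∪ S) = S := by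
      intro S hS
      ext u
      simp only [mem_inter, mem_union]
      constructor
      · rintro ⟨hu, h | h⟩
        · exact absurd hu (hJnb u h)
        · exact h
      · exact fun hu => ⟨hUnb (mem_powerset.mp hS hu), Or.inr hu⟩
    -- rewrite sums
    have eL : ∑ S ∈ U.powerset, lam ^ (J ∪ S).card = lam ^ J.card * (1 + lam) ^ U.card := by
      rw [← hc_sum_pow lam U, Finset.mul_sum]
      refine Finset.sum_congr rfl fun S hS => ?_
      rw [hJS S hS, pow_add]
    have eR : ∑ S ∈ U.powerset,
        lam ^ (J ∪ S).card * (α * (G.degree v) * (if v ∈ J ∪ S then 1 else 0)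
          + β * (((G.neighborFinset v ∩ (J ∪ S)).card : ℝ)))
        = lam ^ J.card * (β * ∑ S ∈ U.powerset, (S.card : ℝ) * lam ^ S.card) := by
      rw [Finset.mul_sum, Finset.mul_sum]
      refine Finset.sum_congr rfl fun S hS => ?_
      rw [hJS S hS, pow_add, if_neg (hvJS S hS), hNJS S hS]
      ring
    rw [eL, eR, hcardvJ, hNvJ, if_pos (mem_insert_self v J)]
    simp only [card_empty, Nat.cast_zero]
    have hA := hc_sum_card_pow lam U
    set A := ∑ S ∈ U.powerset, (S.card : ℝ) * lam ^ S.card with hAdef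
    have hfib := hc_fiber_ineq lam α β (G.degree v) hlam hα hβ hd U.card A hA
    have hlampos : (0:ℝ) < lam ^ J.card := pow_pos hlam _
    calc (α + β) * (lam * (Real.log (G.degree v) + Real.log (α/β)
            + Real.log (Real.log (1+lam)) + 1)
          / ((1 + α/β) * (1+lam) * Real.log (1+lam)))
        * (lam ^ (J.card + 1) + lam ^ J.card * (1 + lam) ^ U.card)
        = lam ^ J.card * ((α + β) * (lam * (Real.log (G.degree v) + Real.log (α/β)
            + Real.log (Real.log (1+lam)) + 1)
          / ((1 + α/β) * (1+lam) * Real.log (1+lam))) * (lam + (1+lam)^U.card)) := by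
          rw [pow_succ]; ring
      _ ≤ lam ^ J.card * (α * (G.degree v) * lam + β * A) :=
          mul_le_mul_of_nonneg_left hfib (le_of_lt hlampos)
      _ = lam ^ (J.card + 1) * (α * (G.degree v) * 1 + β * 0)
          + lam ^ J.card * (β * A) := by rw [pow_succ]; ring
end PV

lemma hc_double_count {V : Type*} [Fintype V] [DecidableEq V] (G : SimpleGraph V)
    [DecidableRel G.Adj] (I : Finset V) :
    ∑ u ∈ I, (G.degree u : ℝ) = ∑ w : V, ((G.neighborFinset w ∩ I).card : ℝ) := by
  have h : ∀ w : V, G.neighborFinset w ∩ I = I.filter (fun u => G.Adj w u) := by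
    intro w
    ext u
    simp [SimpleGraph.mem_neighborFinset, and_comm]
  have hnat : ∑ w : V, (G.neighborFinset w ∩ I).card = ∑ u ∈ I, G.degree u := by
    simp_rw [h, Finset.card_filter]
    rw [Finset.sum_comm]
    refine Finset.sum_congr rfl fun u hu => ?_
    have : (univ.filter fun w => G.Adj w u) = G.neighborFinset u := by
      ext w
      simp [SimpleGraph.mem_neighborFinset, G.adj_comm]
    rw [Finset.sum_boole, this]
    rfl
  rw [← Nat.cast_sum, ← hnat, Nat.cast_sum]

lemma hc_ite_sum {V : Type*} [Fintype V] [DecidableEq V] (G : SimpleGraph V)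
    [DecidableRel G.Adj] (I : Finset V) :
    ∑ u ∈ I, (G.degree u : ℝ)
      = ∑ w : V, (G.degree w : ℝ) * (if w ∈ I then 1 else 0) := by
  simp_rw [mul_ite, mul_one, mul_zero]
  rw [Finset.sum_ite_mem, Finset.univ_inter]

/-- The expected number of edges leaving the hard-core independent set in a triangle-free
graph: for `𝐗 = Σ_{v ∈ 𝐈} deg(v)`, the number of edges between `𝐈` and its complement,
`𝔼𝐗 ≥ n·lam·((1/n)·Σ_v log deg(v) + log(α/β) + log log(1+lam) + 1) / ((1+α/β)·(1+lam)·log(1+lam))`. -/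

theorem hard_core_expected_crossing_edges {V : Type*} [Fintype V] [DecidableEq V]
    (G : SimpleGraph V) [DecidableRel G.Adj] (hG : G.CliqueFree 3)
    (hdeg : ∀ v : V, 1 ≤ G.degree v)
    (lam α β : ℝ) (hlam : 0 < lam) (hα : 0 < α) (hβ : 0 < β) :
    (Fintype.card V : ℝ) * lam *
        ((1 / (Fintype.card V : ℝ)) * (∑ v : V, Real.log (G.degree v)) +
          Real.log (α / β) + Real.log (Real.log (1 + lam)) + 1) /
        ((1 + α / β) * (1 + lam) * Real.log (1 + lam)) ≤
      ∑ I : Finset V, hcProb G lam I * ∑ v ∈ I, (G.degree v : ℝ) := by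
  classical
  have hIempty : IndepFinset G (∅ : Finset V) := fun u hu => absurd hu (notMem_empty u)
  have hZpos : 0 < ∑ I ∈ univ.filter (fun I : Finset V => IndepFinset G I), lam ^ I.card := by
    refine Finset.sum_pos' (fun I _ => (pow_pos hlam _).le) ⟨∅, ?_, ?_⟩
    · exact mem_filter.mpr ⟨mem_univ _, hIempty⟩
    · simpa using one_pos
  have hRHS : (∑ I : Finset V, hcProb G lam I * ∑ u ∈ I, (G.degree u : ℝ))
      = (∑ I ∈ univ.filter (fun I : Finset V => IndepFinset G I),
          lam ^ I.card * ∑ u ∈ I, (G.degree u : ℝ))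
        / (∑ I ∈ univ.filter (fun I : Finset V => IndepFinset G I), lam ^ I.card) := by
    unfold hcProb
    rw [show (∑ J : Finset V, if IndepFinset G J then lam ^ J.card else 0)
        = ∑ I ∈ univ.filter (fun I : Finset V => IndepFinset G I), lam ^ I.card from
        (Finset.sum_filter _ _).symm]
    calc ∑ I : Finset V, ((if IndepFinset G I then lam ^ I.card else 0)
            / (∑ I ∈ univ.filter (fun I : Finset V => IndepFinset G I), lam ^ I.card))
          * ∑ u ∈ I, (G.degree u : ℝ)
        = ∑ I : Finset V, (if IndepFinset G I then lam ^ I.card * ∑ u ∈ I, (G.degree u : ℝ)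
            else 0) / (∑ I ∈ univ.filter (fun I : Finset V => IndepFinset G I), lam ^ I.card) := by
          refine Finset.sum_congr rfl fun I _ => ?_
          by_cases h : IndepFinset G I <;> simp [h, div_mul_eq_mul_div]
      _ = (∑ I : Finset V, if IndepFinset G I then lam ^ I.card * ∑ u ∈ I, (G.degree u : ℝ)
            else 0) / (∑ I ∈ univ.filter (fun I : Finset V => IndepFinset G I), lam ^ I.card) := by
          rw [Finset.sum_div]
      _ = _ := by simp [Finset.sum_filter]
  rw [hRHS, le_div_iff₀ hZpos]
  have hαβ : (0:ℝ) < α + β := by linarith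
  have hmain : (∑ w : V, lam * (Real.log (G.degree w) + Real.log (α/β)
        + Real.log (Real.log (1+lam)) + 1) / ((1 + α/β) * (1+lam) * Real.log (1+lam)))
      * (∑ I ∈ univ.filter (fun I : Finset V => IndepFinset G I), lam ^ I.card)
      ≤ ∑ I ∈ univ.filter (fun I : Finset V => IndepFinset G I),
          lam ^ I.card * ∑ u ∈ I, (G.degree u : ℝ) := by
    refine le_of_mul_le_mul_left ?_ hαβ
    calc (α + β) * ((∑ w : V, lam * (Real.log (G.degree w) + Real.log (α/β)
            + Real.log (Real.log (1+lam)) + 1) / ((1 + α/β) * (1+lam) * Real.log (1+lam)))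
          * (∑ I ∈ univ.filter (fun I : Finset V => IndepFinset G I), lam ^ I.card))
        = ∑ w : V, (α + β) * (lam * (Real.log (G.degree w) + Real.log (α/β)
            + Real.log (Real.log (1+lam)) + 1) / ((1 + α/β) * (1+lam) * Real.log (1+lam)))
          * (∑ I ∈ univ.filter (fun I : Finset V => IndepFinset G I), lam ^ I.card) := by
          rw [← Finset.sum_mul, ← Finset.mul_sum]; ring
      _ ≤ ∑ w : V, ∑ I ∈ univ.filter (fun I : Finset V => IndepFinset G I),
            lam ^ I.card * (α * (G.degree w) * (if w ∈ I then 1 else 0)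
              + β * (((G.neighborFinset w ∩ I).card : ℝ))) :=
          Finset.sum_le_sum fun w _ => hc_per_vertex G hG w (hdeg w) lam α β hlam hα hβ
      _ = ∑ I ∈ univ.filter (fun I : Finset V => IndepFinset G I), ∑ w : V,
            lam ^ I.card * (α * (G.degree w) * (if w ∈ I then 1 else 0)
              + β * (((G.neighborFinset w ∩ I).card : ℝ))) := Finset.sum_comm
      _ = (α + β) * ∑ I ∈ univ.filter (fun I : Finset V => IndepFinset G I),
            lam ^ I.card * ∑ u ∈ I, (G.degree u : ℝ) := by
          rw [Finset.mul_sum]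
          refine Finset.sum_congr rfl fun I _ => ?_
          rw [← Finset.mul_sum]
          have h1 : ∑ w : V, (α * (G.degree w : ℝ) * (if w ∈ I then 1 else 0)
              + β * (((G.neighborFinset w ∩ I).card : ℝ)))
              = α * (∑ u ∈ I, (G.degree u : ℝ)) + β * (∑ u ∈ I, (G.degree u : ℝ)) := by
            rw [Finset.sum_add_distrib]
            congr 1
            · rw [hc_ite_sum G I, Finset.mul_sum]
              refine Finset.sum_congr rfl fun w _ => by ring
            · rw [hc_double_count G I, Finset.mul_sum]
          rw [h1]
          ring
  rcases Nat.eq_zero_or_pos (Fintype.card V) with h0 | h0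
  · rw [h0]
    have h00 : ((0:ℕ):ℝ) * lam * ((1 / ((0:ℕ):ℝ)) * (∑ v : V, Real.log (G.degree v)) +
          Real.log (α / β) + Real.log (Real.log (1 + lam)) + 1) /
        ((1 + α / β) * (1 + lam) * Real.log (1 + lam)) = 0 := by
      simp
    rw [h00, zero_mul]
    exact Finset.sum_nonneg fun I _ => mul_nonneg (pow_pos hlam _).le
      (Finset.sum_nonneg fun u _ => Nat.cast_nonneg _)
  · have hn0 : (0:ℝ) < (Fintype.card V : ℝ) := by exact_mod_cast h0
    have hL : (Fintype.card V : ℝ) * lam *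
        ((1 / (Fintype.card V : ℝ)) * (∑ v : V, Real.log (G.degree v)) +
          Real.log (α / β) + Real.log (Real.log (1 + lam)) + 1) /
        ((1 + α / β) * (1 + lam) * Real.log (1 + lam))
        = ∑ w : V, lam * (Real.log (G.degree w) + Real.log (α/β)
            + Real.log (Real.log (1+lam)) + 1) / ((1 + α/β) * (1+lam) * Real.log (1+lam)) := by
      rw [← Finset.sum_div]
      congr 1
      have hsum : ∑ w : V, lam * (Real.log (G.degree w) + Real.log (α/β)
            + Real.log (Real.log (1+lam)) + 1)
          = lam * ((∑ w : V, Real.log (G.degree w)) + (Fintype.card V : ℝ) *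
              (Real.log (α/β) + Real.log (Real.log (1+lam)) + 1)) := by
        simp_rw [mul_add, Finset.sum_add_distrib, ← Finset.mul_sum]
        rw [Finset.sum_const, Finset.card_univ, nsmul_eq_mul, Finset.sum_const,
          Finset.card_univ, nsmul_eq_mul, Finset.sum_const, Finset.card_univ, nsmul_eq_mul]
        ring
      rw [hsum]
      field_simp
      ring
    rw [hL]
    exact hmain
end
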